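/- arXiv:2411.11336 — 3 statements merged into one kernel-verified Lean document; each statement's English description precedes it below -/
import Mathlib

section
/- Let P be a polynomial of degree n with all zeros in the open unit disk and p a polynomial with deg p ≤ n and |p(z)| ≤ |P(z)| on |z| = 1. Then for every β ∈ ℂ with |β| ≤ 1, every R ≥ 1, every a with |a| ≤ 1, and every z with |z| = 1: |S̃_a[p](Rz) − β S̃_a[p](z)| ≤ |S̃_a[P](Rz) − β S̃_a[P](z)|. -/
open Polynomial Metric Set

noncomputable def maxSphere (P : Polynomial ℂ) : ℝ :=
  sSup ((fun w => ‖P.eval w‖) '' sphere (0:ℂ) 1)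

noncomputable def minSphere (P : Polynomial ℂ) : ℝ :=
  sInf ((fun w => ‖P.eval w‖) '' sphere (0:ℂ) 1)

open ComplexConjugate Filter

lemma keyReal (a b u X Y W : ℝ) (hA : 1 ≤ a) (hZ : 1 ≤ b) (hs0 : 0 ≤ u) (hs : u < 1)
    (hX : X ≤ a*b) (hc : 0 < a^2*b^2 - 2*X + 1) (hY : |Y| ≤ b*u) (hW : |W| ≤ a*u) :
    0 < a^2*b^2 - u^2 - (1-u^2)*X - (a^2-1)*Y - (b^2-1)*W := by
  have ha2 : (0:ℝ) ≤ a^2 - 1 := by nlinarith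
  have hb2 : (0:ℝ) ≤ b^2 - 1 := by nlinarith
  have h1 : (a^2-1)*Y ≤ (a^2-1)*(b*u) := mul_le_mul_of_nonneg_left (abs_le.1 hY).2 ha2
  have h2 : (b^2-1)*W ≤ (b^2-1)*(a*u) := mul_le_mul_of_nonneg_left (abs_le.1 hW).2 hb2
  have hab : 1 ≤ a*b := one_le_mul_of_one_le_of_one_le hA hZ
  have hau : u < a := lt_of_lt_of_le hs hA
  have hbu : u < b := lt_of_lt_of_le hs hZ
  rcases lt_or_eq_of_le hX with h | h
  · have h4 : 0 < (1-u^2)*(a*b - X) := mul_pos (by nlinarith) (by linarith)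
    have h3 : 0 ≤ (a*b-1)*((a-u)*(b-u)) :=
      mul_nonneg (by linarith) (mul_nonneg (by linarith) (by linarith))
    nlinarith [h3, h4]
  · have hab1 : 1 < a*b := by
      rcases lt_or_eq_of_le hab with h' | h'
      · exact h'
      · exfalso; rw [h] at hc; nlinarith
    have h3 : 0 < (a*b-1)*((a-u)*(b-u)) :=
      mul_pos (by linarith) (mul_pos (by linarith) (by linarith))
    nlinarith [h3]

lemma keyC (α z w : ℂ) (hα : 1 ≤ ‖α‖) (hz : 1 ≤ ‖z‖)
    (hw : ‖w‖ < 1) (hne : conj α * z ≠ 1) :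
    0 < ((conj α * z - 1) * ((α - w) * conj (z - w))).re := by
  have hid : ((conj α * z - 1) * ((α - w) * conj (z - w))).re =
      (‖α‖)^2*(‖z‖)^2 - (‖w‖)^2
      - (1 - (‖w‖)^2) * (α * conj z).re
      - ((‖α‖)^2 - 1)*((z * conj w).re) - ((‖z‖)^2 - 1)*((α * conj w).re) := by
    simp only [Complex.sq_norm]
    simp only [Complex.sq_norm, Complex.normSq_apply, Complex.mul_re, Complex.mul_im,
      Complex.sub_re, Complex.sub_im, Complex.conj_re, Complex.conj_im, Complex.one_re,
      Complex.one_im]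
    ring
  rw [hid]
  have hc : 0 < (‖α‖)^2*(‖z‖)^2 - 2*(α * conj z).re + 1 := by
    have h0 : Complex.normSq (conj α * z - 1) ≠ 0 := by
      simpa [Complex.normSq_eq_zero, sub_eq_zero] using hne
    have h1 : (0:ℝ) < Complex.normSq (conj α * z - 1) :=
      lt_of_le_of_ne (Complex.normSq_nonneg _) (Ne.symm h0)
    have h2 : Complex.normSq (conj α * z - 1) =
        (‖α‖)^2*(‖z‖)^2 - 2*(α * conj z).re + 1 := by
      simp only [Complex.sq_norm]
      simp only [Complex.sq_norm, Complex.normSq_apply, Complex.mul_re, Complex.mul_im,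
        Complex.sub_re, Complex.sub_im, Complex.conj_re, Complex.conj_im, Complex.one_re,
        Complex.one_im]
      ring
    linarith [h2 ▸ h1]
  refine keyReal _ _ _ _ _ _ hα hz (norm_nonneg w) hw ?_ hc ?_ ?_
  · calc (α * conj z).re ≤ ‖α * conj z‖ := Complex.re_le_norm _
      _ = ‖α‖ * ‖z‖ := by rw [norm_mul, Complex.norm_conj]
  · calc |(z * conj w).re| ≤ ‖z * conj w‖ := Complex.abs_re_le_norm _
      _ = ‖z‖ * ‖w‖ := by rw [norm_mul, Complex.norm_conj]
  · calc |(α * conj w).re| ≤ ‖α * conj w‖ := Complex.abs_re_le_norm _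
      _ = ‖α‖ * ‖w‖ := by rw [norm_mul, Complex.norm_conj]

lemma lagAux (α z : ℂ) (hα : 1 ≤ ‖α‖) (hz : 1 ≤ ‖z‖)
    (hne : conj α * z ≠ 1) (M : Multiset ℂ) (hM : ∀ r ∈ M, ‖r‖ < 1) (h0 : M ≠ 0) :
    0 < ((conj α * z - 1) * conj (((M.map fun r => X - C r).prod).eval z) *
      ((M.card : ℂ) * (((M.map fun r => X - C r).prod).eval z)
        + (α - z) * ((derivative ((M.map fun r => X - C r).prod)).eval z))).re := by
  induction M using Multiset.induction_on with
  | empty => exact absurd rfl h0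
  | cons r M ih =>
    have hr : ‖r‖ < 1 := hM r (Multiset.mem_cons_self r M)
    have hM' : ∀ s ∈ M, ‖s‖ < 1 := fun s hs => hM s (Multiset.mem_cons_of_mem hs)
    -- abbreviations
    set q : Polynomial ℂ := (M.map fun r => X - C r).prod with hq
    have hcons : ((r ::ₘ M).map fun r => X - C r).prod = (X - C r) * q := by
      rw [Multiset.map_cons, Multiset.prod_cons]
    have hder : derivative ((X - C r) * q) = q + (X - C r) * derivative q := by
      rw [derivative_mul, derivative_sub, derivative_X, derivative_C, sub_zero, one_mul]
    set Q : ℂ := q.eval z with hQ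
    set Q' : ℂ := (derivative q).eval z with hQ'
    have hcard : ((r ::ₘ M).card : ℂ) = (M.card : ℂ) + 1 := by
      rw [Multiset.card_cons]; push_cast; ring
    have heval : (((r ::ₘ M).map fun r => X - C r).prod).eval z = (z - r) * Q := by
      rw [hcons]; simp [hQ]
    have heval' : (derivative (((r ::ₘ M).map fun r => X - C r).prod)).eval z
        = Q + (z - r) * Q' := by
      rw [hcons, hder]; simp [hQ, hQ']
    rw [heval, heval', hcard]
    have hsplit : (conj α * z - 1) * conj ((z - r) * Q) *
        ((((M.card : ℂ) + 1)) * ((z - r) * Q) + (α - z) * (Q + (z - r) * Q'))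
        = (((z - r) * conj (z - r))) * ((conj α * z - 1) * conj Q *
            ((M.card : ℂ) * Q + (α - z) * Q'))
          + (Q * conj Q) * ((conj α * z - 1) * ((α - r) * conj (z - r))) := by
      simp only [map_mul]
      ring
    rw [hsplit]
    have h1 : ((z - r) * conj (z - r)) = ((Complex.normSq (z - r) : ℝ) : ℂ) := by
      rw [Complex.mul_conj]
    have h2 : (Q * conj Q) = ((Complex.normSq Q : ℝ) : ℂ) := by
      rw [Complex.mul_conj]
    rw [h1, h2, Complex.add_re, Complex.re_ofReal_mul, Complex.re_ofReal_mul]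
    have hkey := keyC α z r hα hz hr hne
    rcases eq_or_ne M 0 with hM0 | hM0
    · subst hM0
      have hQ1 : Q = 1 := by simp [hQ, hq]
      have hQ'0 : Q' = 0 := by simp [hQ', hq]
      rw [hQ1, hQ'0]
      simpa using hkey
    · have hih := ih hM' hM0
      have hzr : (0:ℝ) < Complex.normSq (z - r) := by
        rw [Complex.normSq_pos, sub_ne_zero]
        intro hzr; rw [hzr] at hz; linarith
      have := mul_pos hzr hih
      have h2' := mul_nonneg (Complex.normSq_nonneg Q) hkey.le
      linarith

lemma laguerre (h : Polynomial ℂ) (n : ℕ) (hn : 1 ≤ n) (hdeg : h.natDegree = n)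
    (hroots : ∀ r : ℂ, h.eval r = 0 → ‖r‖ < 1)
    (α z : ℂ) (hα : 1 ≤ ‖α‖) (hz : 1 ≤ ‖z‖) :
    (n : ℂ) * h.eval z + (α - z) * (derivative h).eval z ≠ 0 := by
  have hne0 : h ≠ 0 := by
    intro h0
    rw [h0] at hdeg; simp at hdeg; omega
  have hcard : h.roots.card = h.natDegree :=
    (splits_iff_card_roots).mp (IsAlgClosed.splits h)
  have hfact := C_leadingCoeff_mul_prod_multiset_X_sub_C hcard
  set M : Multiset ℂ := h.roots with hM
  set q : Polynomial ℂ := (M.map fun r => X - C r).prod with hq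
  have hMlt : ∀ r ∈ M, ‖r‖ < 1 := by
    intro r hr
    exact hroots r ((mem_roots hne0).mp hr)
  have hMcard : (M.card : ℂ) = (n : ℂ) := by rw [hcard, hdeg]
  have hlc : h.leadingCoeff ≠ 0 := leadingCoeff_ne_zero.mpr hne0
  have hevalh : h.eval z = h.leadingCoeff * q.eval z := by
    conv_lhs => rw [← hfact]
    simp
  have hevalh' : (derivative h).eval z = h.leadingCoeff * (derivative q).eval z := by
    conv_lhs => rw [← hfact]
    simp [derivative_C_mul]
  have hqz : q.eval z ≠ 0 := by
    rw [hq, eval_multiset_prod]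
    refine Multiset.prod_ne_zero ?_
    intro hc
    rw [Multiset.mem_map] at hc
    obtain ⟨f, hf, hf0⟩ := hc
    rw [Multiset.mem_map] at hf
    obtain ⟨r, hr, rfl⟩ := hf
    simp only [eval_sub, eval_X, eval_C] at hf0
    have : z = r := by linear_combination hf0
    rw [this] at hz
    exact absurd (hMlt r hr) (by linarith)
  have hhz : h.eval z ≠ 0 := by
    rw [hevalh]; exact mul_ne_zero hlc hqz
  have hexpr : (n : ℂ) * h.eval z + (α - z) * (derivative h).eval z =
      h.leadingCoeff * ((M.card : ℂ) * q.eval z + (α - z) * (derivative q).eval z) := by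
    rw [hevalh, hevalh', hMcard]; ring
  by_cases hne : conj α * z = 1
  · -- then α = z
    have habs : ‖α‖ * ‖z‖ = 1 := by
      have := congrArg (‖·‖) hne
      rwa [norm_mul, Complex.norm_conj, norm_one] at this
    have hα1 : ‖α‖ = 1 := by nlinarith
    have hz1 : ‖z‖ = 1 := by nlinarith
    have hαz : α = z := by
      have h1 : conj α * α = 1 := by
        rw [mul_comm, Complex.mul_conj, Complex.normSq_eq_norm_sq, hα1]
        norm_num
      have := mul_left_cancel₀ (a := conj α) ?_ (hne.trans h1.symm)
      · exact this.symm
      · intro hc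
        have := congrArg (‖·‖) hc
        rw [Complex.norm_conj, norm_zero] at this
        rw [this] at hα1; norm_num at hα1
    rw [hαz, sub_self, zero_mul, add_zero]
    exact mul_ne_zero (Nat.cast_ne_zero.mpr (by omega)) hhz
  · have hpos := lagAux α z hα hz hne M hMlt (by
      intro hc
      rw [hc] at hcard
      simp at hcard
      omega)
    intro hc
    rw [hexpr] at hc
    have hD : (M.card : ℂ) * q.eval z + (α - z) * (derivative q).eval z = 0 :=
      (mul_eq_zero.mp hc).resolve_left hlc
    rw [← hq] at hpos
    rw [hD, mul_zero] at hpos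
    simp at hpos

lemma factLt (y r : ℂ) (hy : 1 ≤ ‖y‖) (hr : ‖r‖ < 1)
    (R : ℝ) (hR : 1 < R) : ‖y - r‖ < ‖(R:ℂ)*y - r‖ := by
  rw [Complex.norm_def, Complex.norm_def]
  apply Real.sqrt_lt_sqrt (Complex.normSq_nonneg _)
  have e1 : Complex.normSq ((R:ℂ)*y - r) =
      R^2 * Complex.normSq y - 2*R*((y * conj r).re) + Complex.normSq r := by
    simp [Complex.normSq_apply, Complex.mul_re, Complex.mul_im, Complex.sub_re, Complex.sub_im,
      Complex.conj_re, Complex.conj_im, Complex.ofReal_re, Complex.ofReal_im]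
    ring
  have e2 : Complex.normSq (y - r) =
      Complex.normSq y - 2*((y * conj r).re) + Complex.normSq r := by
    simp [Complex.normSq_apply, Complex.mul_re, Complex.mul_im, Complex.sub_re, Complex.sub_im,
      Complex.conj_re, Complex.conj_im]
    ring
  rw [e1, e2]
  have hu : (y * conj r).re ≤ ‖y‖ * ‖r‖ := by
    calc (y * conj r).re ≤ ‖y * conj r‖ := Complex.re_le_norm _
      _ = ‖y‖ * ‖r‖ := by rw [norm_mul, Complex.norm_conj]
  have hyv : ‖y‖ ^ 2 = Complex.normSq y := Complex.sq_norm y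
  have h2 : (y * conj r).re < Complex.normSq y := by
    have : ‖y‖ * ‖r‖ < ‖y‖ * 1 := by
      apply mul_lt_mul_of_pos_left hr (by linarith)
    nlinarith
  nlinarith [mul_pos (sub_pos.2 hR) (sub_pos.2 h2),
    mul_nonneg (mul_nonneg (sub_pos.2 hR).le (sub_pos.2 hR).le) (Complex.normSq_nonneg y)]

lemma prodLt (y : ℂ) (hy : 1 ≤ ‖y‖) (R : ℝ) (hR : 1 < R)
    (M : Multiset ℂ) (hM : ∀ r ∈ M, ‖r‖ < 1) :
    (0 < (M.map fun r => ‖y - r‖).prod) ∧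
    (M ≠ 0 → (M.map fun r => ‖y - r‖).prod
      < (M.map fun r => ‖(R:ℂ)*y - r‖).prod) := by
  induction M using Multiset.induction_on with
  | empty => refine ⟨by simp, fun h => absurd rfl h⟩
  | cons r M ih =>
    have hr := hM r (Multiset.mem_cons_self r M)
    have hM' : ∀ s ∈ M, ‖s‖ < 1 := fun s hs => hM s (Multiset.mem_cons_of_mem hs)
    obtain ⟨ihpos, ihlt⟩ := ih hM'
    have hyr : 0 < ‖y - r‖ := by
      rw [norm_pos_iff, sub_ne_zero]
      intro h; rw [h] at hy; linarith
    constructor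
    · simpa using mul_pos hyr ihpos
    · intro _
      simp only [Multiset.map_cons, Multiset.prod_cons]
      rcases eq_or_ne M 0 with rfl | hM0
      · simpa using factLt y r hy hr R hR
      · have h1 := factLt y r hy hr R hR
        have h2 := ihlt hM0
        have hpos2 : 0 ≤ (M.map fun r => ‖(R:ℂ)*y - r‖).prod := by
          refine Multiset.prod_nonneg ?_
          intro x hx
          rw [Multiset.mem_map] at hx
          obtain ⟨s, _, rfl⟩ := hx
          exact norm_nonneg _
        calc ‖y - r‖ * (M.map fun r => ‖y - r‖).prod
            < ‖(R:ℂ)*y - r‖ * (M.map fun r => ‖y - r‖).prod :=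
              mul_lt_mul_of_pos_right h1 ihpos
          _ ≤ ‖(R:ℂ)*y - r‖ * (M.map fun r => ‖(R:ℂ)*y - r‖).prod := by
              apply mul_le_mul_of_nonneg_left h2.le (norm_nonneg _)

lemma growth (h : Polynomial ℂ) (hne0 : h ≠ 0) (hn : 1 ≤ h.natDegree)
    (hroots : ∀ r : ℂ, h.eval r = 0 → ‖r‖ < 1)
    (y : ℂ) (hy : 1 ≤ ‖y‖) (R : ℝ) (hR : 1 < R) :
    ‖h.eval y‖ < ‖h.eval ((R:ℂ)*y)‖ := by
  have hcard : h.roots.card = h.natDegree :=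
    (splits_iff_card_roots).mp (IsAlgClosed.splits h)
  have hfact := C_leadingCoeff_mul_prod_multiset_X_sub_C hcard
  have hMlt : ∀ r ∈ h.roots, ‖r‖ < 1 := fun r hr =>
    hroots r ((mem_roots hne0).mp hr)
  have hev : ∀ w : ℂ, ‖h.eval w‖
      = ‖h.leadingCoeff‖ * ((h.roots.map fun r => ‖w - r‖).prod) := by
    intro w
    conv_lhs => rw [← hfact]
    rw [eval_mul, eval_C, norm_mul, eval_multiset_prod]
    congr 1
    rw [show ∀ s : Multiset ℂ, ‖s.prod‖ = (s.map (‖·‖)).prod from fun s => map_multiset_prod (normHom : ℂ →*₀ ℝ) s, Multiset.map_map, Multiset.map_map]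
    congr 1
    ext r
    simp
  rw [hev, hev]
  have hlc : 0 < ‖h.leadingCoeff‖ := by
    rw [norm_pos_iff]; exact leadingCoeff_ne_zero.mpr hne0
  obtain ⟨_, hlt⟩ := prodLt y hy R hR h.roots hMlt
  refine mul_lt_mul_of_pos_left (hlt ?_) hlc
  intro hc
  rw [hc] at hcard; simp at hcard; omega

lemma step2 (n : ℕ) (hn : 1 ≤ n) (h : Polynomial ℂ) (hdeg : h.natDegree = n)
    (hroots : ∀ r : ℂ, h.eval r = 0 → ‖r‖ < 1)
    (a β : ℂ) (ha0 : a ≠ 0) (ha : ‖a‖ ≤ 1) (hβ : ‖β‖ ≤ 1)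
    (R : ℝ) (hR : 1 < R) (z : ℂ) (hz : ‖z‖ = 1) :
    ((1 + a * z) * (R:ℂ) * (derivative h).eval ((R:ℂ) * z) - (n:ℂ) * a * h.eval ((R:ℂ) * z)) -
      β * ((1 + a * z) * (derivative h).eval z - (n:ℂ) * a * h.eval z) ≠ 0 := by
  have hne0 : h ≠ 0 := fun hc => by rw [hc] at hdeg; simp at hdeg; omega
  have hR0 : (R:ℂ) ≠ 0 := by
    intro hc; rw [Complex.ofReal_eq_zero] at hc; linarith
  set F : Polynomial ℂ := h.comp (C (R:ℂ) * X) - C β * h with hF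
  have hevF : ∀ y : ℂ, F.eval y = h.eval ((R:ℂ)*y) - β * h.eval y := by
    intro y; simp [hF, eval_comp]
  have hderF : ∀ y : ℂ, (derivative F).eval y
      = (R:ℂ) * (derivative h).eval ((R:ℂ)*y) - β * (derivative h).eval y := by
    intro y
    simp only [hF, derivative_sub, derivative_mul, derivative_C, zero_mul, zero_add,
      derivative_comp, derivative_mul, derivative_X, derivative_C, mul_one, zero_mul, zero_add,
      eval_sub, eval_mul, eval_comp, eval_C, eval_X]
  -- degree of F
  have hdc : (h.comp (C (R:ℂ) * X)).natDegree = n := by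
    rw [natDegree_comp, natDegree_C_mul_X _ hR0, mul_one, hdeg]
  have hlcc : (h.comp (C (R:ℂ) * X)).leadingCoeff = h.leadingCoeff * (R:ℂ)^n := by
    rw [leadingCoeff_comp (by rw [natDegree_C_mul_X _ hR0]; norm_num)]
    rw [leadingCoeff_C_mul_X, hdeg]
  have hRn : ‖(R:ℂ)^n‖ = R^n := by
    rw [norm_pow, Complex.norm_real, Real.norm_eq_abs, abs_of_pos (by linarith)]
  have hRngt : 1 < R^n := by
    calc (1:ℝ) < R := hR
      _ ≤ R^n := le_self_pow₀ (by linarith) (by omega)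
  have hcoeffF : F.coeff n = h.leadingCoeff * ((R:ℂ)^n - β) := by
    rw [hF, coeff_sub, coeff_C_mul]
    have c1 : (h.comp (C (R:ℂ) * X)).coeff n = h.leadingCoeff * (R:ℂ)^n := by
      conv_lhs => rw [← hdc]
      rw [coeff_natDegree, hlcc]
    have c2 : h.coeff n = h.leadingCoeff := by rw [← hdeg, coeff_natDegree]
    rw [c1, c2]; ring
  have hcoeffne : F.coeff n ≠ 0 := by
    rw [hcoeffF]
    apply mul_ne_zero (leadingCoeff_ne_zero.mpr hne0)
    intro hc
    have : ‖(R:ℂ)^n‖ = ‖β‖ := by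
      rw [sub_eq_zero] at hc; rw [hc]
    rw [hRn] at this; linarith
  have hdegF : F.natDegree = n := by
    have hle : F.natDegree ≤ n := by
      refine le_trans (natDegree_sub_le _ _) ?_
      simp only [max_le_iff]
      constructor
      · rw [hdc]
      · refine le_trans (natDegree_C_mul_le _ _) (le_of_eq hdeg)
    exact le_antisymm hle (le_natDegree_of_ne_zero hcoeffne)
  have hFne0 : F ≠ 0 := fun hc => hcoeffne (by rw [hc]; simp)
  have hrootsF : ∀ r : ℂ, F.eval r = 0 → ‖r‖ < 1 := by
    intro r hr
    by_contra hge
    push_neg at hge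
    rw [hevF] at hr
    have hgr := growth h hne0 (hdeg ▸ hn) hroots r hge R hR
    have : ‖h.eval ((R:ℂ)*r)‖ = ‖β * h.eval r‖ := by
      rw [sub_eq_zero] at hr; rw [hr]
    rw [norm_mul] at this
    nlinarith [norm_nonneg (h.eval r), norm_nonneg β]
  -- Laguerre with α = -a⁻¹
  set α : ℂ := -a⁻¹ with hα
  have hαabs : 1 ≤ ‖α‖ := by
    rw [hα, norm_neg, norm_inv]
    rw [one_le_inv_iff₀]
    exact ⟨norm_pos_iff.mpr ha0, ha⟩
  have hlag := laguerre F n hn hdegF hrootsF α z hαabs (le_of_eq hz.symm)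
  intro hc
  apply hlag
  have key : (n:ℂ) * F.eval z + (α - z) * (derivative F).eval z =
      (-a⁻¹) * (((1 + a * z) * (R:ℂ) * (derivative h).eval ((R:ℂ) * z)
        - (n:ℂ) * a * h.eval ((R:ℂ) * z)) -
      β * ((1 + a * z) * (derivative h).eval z - (n:ℂ) * a * h.eval z)) := by
    rw [hevF, hderF, hα]
    field_simp
    ring
  rw [key, hc, mul_zero]

lemma reflect_eval_eq (n : ℕ) (f : Polynomial ℂ) (hf : f.natDegree ≤ n) (w : ℂ) (hw : w ≠ 0) :
    (reflect n f).eval w * (w⁻¹)^n = f.eval w⁻¹ := by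
  have hx : (w⁻¹ : ℂ) ≠ 0 := inv_ne_zero hw
  letI : Invertible (w⁻¹ : ℂ) := invertibleOfNonzero hx
  have h2 := eval₂_reflect_mul_pow (RingHom.id ℂ) (w⁻¹) n f hf
  rw [invOf_eq_inv, inv_inv] at h2
  exact h2

lemma abs_reflect_eval (n : ℕ) (f : Polynomial ℂ) (hf : f.natDegree ≤ n) (x : ℂ)
    (hx : ‖x‖ = 1) : ‖(reflect n f).eval x‖ = ‖f.eval x⁻¹‖ := by
  have hx0 : x ≠ 0 := by intro hc; rw [hc] at hx; simp at hx
  have := congrArg (‖·‖) (reflect_eval_eq n f hf x hx0)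
  rwa [norm_mul, norm_pow, norm_inv, hx, inv_one, one_pow, mul_one] at this

lemma step3 (n : ℕ) (P p : Polynomial ℂ) (hP : P.natDegree = n)
    (hzeros : ∀ z : ℂ, P.eval z = 0 → ‖z‖ < 1)
    (hp : p.natDegree ≤ n)
    (hle : ∀ z : ℂ, ‖z‖ = 1 → ‖p.eval z‖ ≤ ‖P.eval z‖) :
    ∀ w : ℂ, ‖w‖ ≤ 1 →
      ‖(reflect n p).eval w‖ ≤ ‖(reflect n P).eval w‖ := by
  have hPne : P ≠ 0 := by
    intro hc
    have := hzeros 2 (by rw [hc]; simp)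
    rw [Complex.norm_two] at this; linarith
  have hPt0 : ∀ w : ℂ, ‖w‖ ≤ 1 → (reflect n P).eval w ≠ 0 := by
    intro w hw
    rcases eq_or_ne w 0 with rfl | hw0
    · rw [← coeff_zero_eq_eval_zero, coeff_reflect, revAt_le (Nat.zero_le n), Nat.sub_zero, ← hP]
      exact leadingCoeff_ne_zero.mpr hPne
    · intro hc
      have := reflect_eval_eq n P (le_of_eq hP) w hw0
      rw [hc, zero_mul] at this
      have h2 := hzeros _ this.symm
      rw [norm_inv, inv_lt_one_iff₀] at h2
      have h3 := norm_pos_iff.mpr hw0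
      rcases h2 with h2 | h2 <;> linarith
  set f : ℂ → ℂ := fun w => (reflect n p).eval w / (reflect n P).eval w with hf
  have hdiff : DifferentiableOn ℂ f (closedBall (0:ℂ) 1) := by
    apply DifferentiableOn.div
    · exact (Polynomial.differentiable _).differentiableOn
    · exact (Polynomial.differentiable _).differentiableOn
    · intro w hw
      rw [mem_closedBall, dist_zero_right] at hw
      exact hPt0 w hw
  intro w hw
  have hwball : w ∈ closure (ball (0:ℂ) 1) := by
    rw [closure_ball (0:ℂ) one_ne_zero, mem_closedBall, dist_zero_right]
    exact hw
  have hmax : ‖f w‖ ≤ 1 := by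
    refine Complex.norm_le_of_forall_mem_frontier_norm_le isBounded_ball ?_ ?_ hwball
    · apply DifferentiableOn.diffContOnCl
      rwa [closure_ball (0:ℂ) one_ne_zero]
    · intro x hx
      rw [frontier_ball (0:ℂ) one_ne_zero, mem_sphere, dist_zero_right] at hx
      have hxinv : ‖x⁻¹‖ = 1 := by rw [norm_inv, hx, inv_one]
      rw [hf]
      simp only [norm_div]
      rw [abs_reflect_eval n p hp x hx, abs_reflect_eval n P (le_of_eq hP) x hx]
      have hPx : 0 < ‖P.eval x⁻¹‖ := by
        rw [norm_pos_iff]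
        intro hc
        have := hzeros _ hc
        rw [hxinv] at this; linarith
      rw [div_le_one hPx]
      exact hle x⁻¹ hxinv
  have hPw : 0 < ‖(reflect n P).eval w‖ := by
    rw [norm_pos_iff]; exact hPt0 w hw
  rw [hf] at hmax
  simp only [norm_div] at hmax
  rw [div_le_one hPw] at hmax
  exact hmax

lemma step3ext (n : ℕ) (P p : Polynomial ℂ) (hP : P.natDegree = n)
    (hzeros : ∀ z : ℂ, P.eval z = 0 → ‖z‖ < 1)
    (hp : p.natDegree ≤ n)
    (hle : ∀ z : ℂ, ‖z‖ = 1 → ‖p.eval z‖ ≤ ‖P.eval z‖) :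
    ∀ z : ℂ, 1 ≤ ‖z‖ → ‖p.eval z‖ ≤ ‖P.eval z‖ := by
  intro z hz
  have hz0 : z ≠ 0 := by
    intro hc; rw [hc] at hz; norm_num at hz
  have hw : ‖z⁻¹‖ ≤ 1 := by
    rw [norm_inv, inv_le_one_iff₀]
    right; exact hz
  have key := step3 n P p hP hzeros hp hle z⁻¹ hw
  have e1 := congrArg (‖·‖) (reflect_eval_eq n p hp z⁻¹ (inv_ne_zero hz0))
  have e2 := congrArg (‖·‖) (reflect_eval_eq n P (le_of_eq hP) z⁻¹ (inv_ne_zero hz0))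
  rw [inv_inv] at e1 e2
  rw [norm_mul, norm_pow] at e1 e2
  have hpow : (0:ℝ) ≤ ‖z‖ ^ n := by positivity
  have hmul := mul_le_mul_of_nonneg_right key hpow
  linarith

lemma step3coeff (n : ℕ) (P p : Polynomial ℂ) (hP : P.natDegree = n)
    (hzeros : ∀ z : ℂ, P.eval z = 0 → ‖z‖ < 1)
    (hp : p.natDegree ≤ n)
    (hle : ∀ z : ℂ, ‖z‖ = 1 → ‖p.eval z‖ ≤ ‖P.eval z‖) :
    ‖p.coeff n‖ ≤ ‖P.coeff n‖ := by
  have key := step3 n P p hP hzeros hp hle 0 (by simp)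
  rwa [← coeff_zero_eq_eval_zero, ← coeff_zero_eq_eval_zero, coeff_reflect, coeff_reflect,
    revAt_le (Nat.zero_le n), Nat.sub_zero] at key

lemma mainCore (n : ℕ) (P p : Polynomial ℂ) (hP : P.natDegree = n)
    (hzeros : ∀ z : ℂ, P.eval z = 0 → ‖z‖ < 1)
    (hp : p.natDegree ≤ n)
    (hle : ∀ z : ℂ, ‖z‖ = 1 → ‖p.eval z‖ ≤ ‖P.eval z‖)
    (β a : ℂ) (hβ : ‖β‖ ≤ 1) (ha : ‖a‖ ≤ 1) (ha0 : a ≠ 0)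
    (R : ℝ) (hR : 1 < R) (z : ℂ) (hz : ‖z‖ = 1) :
    ‖((1 + a * z) * R * (derivative p).eval (R * z) - n * a * p.eval (R * z)) -
          β * ((1 + a * z) * (derivative p).eval z - n * a * p.eval z)‖ ≤
        ‖((1 + a * z) * R * (derivative P).eval (R * z) - n * a * P.eval (R * z)) -
          β * ((1 + a * z) * (derivative P).eval z - n * a * P.eval z)‖ := by
  rcases Nat.eq_zero_or_pos n with rfl | hn
  · obtain ⟨c, rfl⟩ := natDegree_eq_zero.mp (Nat.le_zero.mp hp)
    simp
  by_contra hlt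
  push_neg at hlt
  set Ap : ℂ := ((1 + a * z) * R * (derivative p).eval (R * z) - n * a * p.eval (R * z)) -
          β * ((1 + a * z) * (derivative p).eval z - n * a * p.eval z) with hAp
  set AP : ℂ := ((1 + a * z) * R * (derivative P).eval (R * z) - n * a * P.eval (R * z)) -
          β * ((1 + a * z) * (derivative P).eval z - n * a * P.eval z) with hAP
  have hAPne : AP ≠ 0 := step2 n hn P hP hzeros a β ha0 ha hβ R hR z hz
  have hAPpos : 0 < ‖AP‖ := norm_pos_iff.mpr hAPne
  set lam : ℂ := Ap / AP with hlam
  have hlamabs : 1 < ‖lam‖ := by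
    rw [hlam, norm_div, lt_div_iff₀ hAPpos, one_mul]
    exact hlt
  have hPne : P ≠ 0 := by
    intro hc
    have := hzeros 2 (by rw [hc]; simp)
    rw [Complex.norm_two] at this; linarith
  have hPcne : P.coeff n ≠ 0 := by
    rw [← hP, coeff_natDegree]; exact leadingCoeff_ne_zero.mpr hPne
  set h : Polynomial ℂ := p - C lam * P with hh
  have hcoeffh : h.coeff n = p.coeff n - lam * P.coeff n := by
    rw [hh, coeff_sub, coeff_C_mul]
  have hcoeffhne : h.coeff n ≠ 0 := by
    rw [hcoeffh]
    intro hc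
    rw [sub_eq_zero] at hc
    have := congrArg (‖·‖) hc
    rw [norm_mul] at this
    have h1 := step3coeff n P p hP hzeros hp hle
    nlinarith [norm_nonneg (P.coeff n), norm_pos_iff.mpr hPcne]
  have hdegh : h.natDegree = n := by
    refine le_antisymm ?_ (le_natDegree_of_ne_zero hcoeffhne)
    refine le_trans (natDegree_sub_le _ _) ?_
    simp only [max_le_iff]
    exact ⟨hp, le_trans (natDegree_C_mul_le _ _) (le_of_eq hP)⟩
  have hrootsh : ∀ r : ℂ, h.eval r = 0 → ‖r‖ < 1 := by
    intro r hr
    by_contra hge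
    push_neg at hge
    rw [hh, eval_sub, eval_mul, eval_C, sub_eq_zero] at hr
    have habs := congrArg (‖·‖) hr
    rw [norm_mul] at habs
    have h1 := step3ext n P p hP hzeros hp hle r hge
    have h2 : P.eval r ≠ 0 := by
      intro hc
      have := hzeros r hc; linarith
    have h3 := norm_pos_iff.mpr h2
    nlinarith
  have hsh := step2 n hn h hdegh hrootsh a β ha0 ha hβ R hR z hz
  apply hsh
  have hde : derivative h = derivative p - C lam * derivative P := by
    rw [hh, derivative_sub, derivative_mul, derivative_C, zero_mul, zero_add]
  have hlamAP : lam * AP = Ap := by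
    rw [hlam, div_mul_cancel₀ _ hAPne]
  calc ((1 + a * z) * (R:ℂ) * (derivative h).eval ((R:ℂ) * z) - (n:ℂ) * a * h.eval ((R:ℂ) * z)) -
      β * ((1 + a * z) * (derivative h).eval z - (n:ℂ) * a * h.eval z)
      = Ap - lam * AP := by
        rw [hde, hh, hAp, hAP]
        simp only [eval_sub, eval_mul, eval_C]
        ring
    _ = 0 := by rw [hlamAP, sub_self]

theorem stmt_12 (n : ℕ) (P p : Polynomial ℂ) (hP : P.natDegree = n)
    (hzeros : ∀ z : ℂ, P.eval z = 0 → ‖z‖ < 1)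
    (hp : p.natDegree ≤ n)
    (hle : ∀ z : ℂ, ‖z‖ = 1 → ‖p.eval z‖ ≤ ‖P.eval z‖)
    (β a : ℂ) (hβ : ‖β‖ ≤ 1) (ha : ‖a‖ ≤ 1)
    (R : ℝ) (hR : 1 ≤ R) :
    ∀ z : ℂ, ‖z‖ = 1 →
      ‖((1 + a * z) * R * (derivative p).eval (R * z) - n * a * p.eval (R * z)) -
          β * ((1 + a * z) * (derivative p).eval z - n * a * p.eval z)‖ ≤
        ‖((1 + a * z) * R * (derivative P).eval (R * z) - n * a * P.eval (R * z)) -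
          β * ((1 + a * z) * (derivative P).eval z - n * a * P.eval z)‖ := by
  intro z hz
  set G : Polynomial ℂ → ℂ × ℝ → ℝ := fun q x =>
    ‖((1 + x.1 * z) * (x.2:ℂ) * (derivative q).eval ((x.2:ℂ) * z)
        - (n:ℂ) * x.1 * q.eval ((x.2:ℂ) * z)) -
      β * ((1 + x.1 * z) * (derivative q).eval z - (n:ℂ) * x.1 * q.eval z)‖ with hG
  have hGcont : ∀ q : Polynomial ℂ, Continuous (G q) := by
    intro q
    have c0 : Continuous (fun x : ℂ × ℝ => ((x.2 : ℝ) : ℂ)) :=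
      Complex.continuous_ofReal.comp continuous_snd
    have c1 : Continuous (fun x : ℂ × ℝ => x.1) := continuous_fst
    have cev : ∀ r : Polynomial ℂ, Continuous (fun x : ℂ × ℝ => r.eval (((x.2:ℝ):ℂ) * z)) :=
      fun r => (r.continuous).comp (c0.mul continuous_const)
    apply continuous_norm.comp
    refine Continuous.sub (Continuous.sub ?_ ?_) (Continuous.mul continuous_const
      (Continuous.sub ?_ ?_))
    · exact ((continuous_const.add (c1.mul continuous_const)).mul c0).mul (cev (derivative q))
    · exact ((continuous_const.mul c1)).mul (cev q)
    · exact (continuous_const.add (c1.mul continuous_const)).mul continuous_const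
    · exact (continuous_const.mul c1).mul continuous_const
  set aseq : ℕ → ℂ := fun k => if a = 0 then ((1/((k:ℝ)+1) : ℝ) : ℂ) else a with haseq
  set Rseq : ℕ → ℝ := fun k => R + 1/((k:ℝ)+1) with hRseq
  have ht0 : Tendsto (fun k : ℕ => 1/((k:ℝ)+1)) atTop (nhds 0) :=
    tendsto_one_div_add_atTop_nhds_zero_nat
  have hta : Tendsto aseq atTop (nhds a) := by
    rcases eq_or_ne a 0 with rfl | ha0
    · simp only [haseq, if_pos rfl]
      have h1 : Filter.Tendsto (fun x : ℝ => (x:ℂ)) (nhds 0) (nhds 0) := by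
        simpa using Complex.continuous_ofReal.tendsto 0
      exact h1.comp ht0
    · simp only [haseq, if_neg ha0]
      exact tendsto_const_nhds
  have htR : Tendsto Rseq atTop (nhds R) := by
    have h2 := ht0.const_add R
    rw [add_zero] at h2
    exact h2
  have htprod : Tendsto (fun k => (aseq k, Rseq k)) atTop (nhds (a, R)) :=
    hta.prodMk_nhds htR
  have htp : Tendsto (fun k => G p (aseq k, Rseq k)) atTop (nhds (G p (a, R))) :=
    ((hGcont p).tendsto (a, R)).comp htprod
  have htP : Tendsto (fun k => G P (aseq k, Rseq k)) atTop (nhds (G P (a, R))) :=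
    ((hGcont P).tendsto (a, R)).comp htprod
  have hk : ∀ k : ℕ, G p (aseq k, Rseq k) ≤ G P (aseq k, Rseq k) := by
    intro k
    have hkpos : (0:ℝ) < 1/((k:ℝ)+1) := by positivity
    have hkle : 1/((k:ℝ)+1) ≤ 1 := by
      rw [div_le_one (by positivity)]
      simp [Nat.cast_nonneg]
    have ha0k : aseq k ≠ 0 := by
      rw [haseq]
      split
      · simp only [ne_eq, Complex.ofReal_eq_zero]
        positivity
      · assumption
    have hak : ‖aseq k‖ ≤ 1 := by
      rw [haseq]
      split
      · rw [Complex.norm_real, Real.norm_eq_abs, abs_of_pos hkpos]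
        exact hkle
      · exact ha
    have hRk : 1 < Rseq k := by
      rw [hRseq]; dsimp only; linarith
    exact mainCore n P p hP hzeros hp hle β (aseq k) hβ hak ha0k (Rseq k) hRk z hz
  exact le_of_tendsto_of_tendsto' htp htP hk
end

section
/- Let p be a polynomial of degree n. Then for every β ∈ ℂ with |β| ≤ 1, every R ≥ 1, every a with |a| ≤ 1, and every z with |z| ≥ 1: |(1+az)[Rp'(Rz) − βp'(z)] − n a [p(Rz) − βp(z)]| ≤ n |R^n − β| |z|^{n−1} max_{|w|=1}|p(w)|. -/
open Polynomial Metric Set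

noncomputable def Complex.abs : AbsoluteValue ℂ ℝ where
  toFun z := ‖z‖
  map_mul' := norm_mul
  nonneg' := norm_nonneg
  eq_zero' _ := norm_eq_zero
  add_le' := norm_add_le

lemma Complex.norm_eq_abs (z : ℂ) : ‖z‖ = Complex.abs z := rfl

lemma Complex.abs_apply (z : ℂ) : Complex.abs z = √(Complex.normSq z) := Complex.norm_def z

lemma Complex.abs_ofReal (r : ℝ) : Complex.abs (r : ℂ) = |r| := by
  rw [← Complex.norm_eq_abs, Complex.norm_real, Real.norm_eq_abs]

lemma Complex.abs_natCast (k : ℕ) : Complex.abs (k : ℂ) = k := Complex.norm_natCast k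

lemma Complex.abs_conj (z : ℂ) : Complex.abs ((starRingEnd ℂ) z) = Complex.abs z :=
  Complex.norm_conj z

lemma Complex.sq_abs (z : ℂ) : Complex.abs z ^ 2 = Complex.normSq z := Complex.sq_norm z

lemma Complex.re_le_abs (z : ℂ) : z.re ≤ Complex.abs z := Complex.re_le_norm z

lemma Complex.continuous_abs : Continuous Complex.abs := continuous_norm


lemma reflect_eval (f : Polynomial ℂ) (m : ℕ) (hdeg : f.natDegree ≤ m) (x : ℂ) (hx : x ≠ 0) :
    (reflect m f).eval x⁻¹ * x ^ m = f.eval x := by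
  have : Invertible x := invertibleOfNonzero hx
  have h1 := eval₂_reflect_mul_pow (RingHom.id ℂ) x m f hdeg
  rw [invOf_eq_inv] at h1
  exact h1

lemma growth_s14 (f : Polynomial ℂ) (m : ℕ) (hdeg : f.natDegree ≤ m) (C : ℝ)
    (hC : ∀ w : ℂ, Complex.abs w = 1 → Complex.abs (f.eval w) ≤ C) :
    ∀ z : ℂ, 1 ≤ Complex.abs z → Complex.abs (f.eval z) ≤ C * Complex.abs z ^ m := by
  intro z hz
  have hz0 : z ≠ 0 := by
    intro h; rw [h] at hz; simp at hz; linarith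
  set F := reflect m f with hF
  have hFle : Complex.abs (F.eval z⁻¹) ≤ C := by
    have hb : ∀ w ∈ frontier (ball (0:ℂ) 1), ‖F.eval w‖ ≤ C := by
      intro w hw
      rw [frontier_ball (0:ℂ) one_ne_zero] at hw
      have hw1 : Complex.abs w = 1 := by rw [← Complex.norm_eq_abs]; simpa using hw
      have hw0 : w ≠ 0 := by intro h; rw [h] at hw1; simp at hw1
      have hwinv : Complex.abs w⁻¹ = 1 := by simp [hw1]
      have h2 := reflect_eval f m hdeg w⁻¹ (inv_ne_zero hw0)
      rw [inv_inv] at h2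
      have : Complex.abs (F.eval w * (w⁻¹) ^ m) = Complex.abs (f.eval w⁻¹) := by rw [h2]
      rw [map_mul, map_pow, hwinv, one_pow, mul_one] at this
      rw [Complex.norm_eq_abs, this]
      exact hC w⁻¹ hwinv
    have hd : DiffContOnCl ℂ (fun w => F.eval w) (ball (0:ℂ) 1) :=
      (F.differentiable).diffContOnCl
    have hmem : z⁻¹ ∈ closure (ball (0:ℂ) 1) := by
      rw [closure_ball (0:ℂ) one_ne_zero]
      simp only [mem_closedBall, Complex.dist_eq, sub_zero]
      rw [norm_inv]
      exact inv_le_one_of_one_le₀ hz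
    simpa [Complex.norm_eq_abs] using
      Complex.norm_le_of_forall_mem_frontier_norm_le isBounded_ball hd hb hmem
  have h2 := reflect_eval f m hdeg z hz0
  calc Complex.abs (f.eval z) = Complex.abs (F.eval z⁻¹) * Complex.abs z ^ m := by
        rw [← h2, map_mul, map_pow]
    _ ≤ C * Complex.abs z ^ m := by
        apply mul_le_mul_of_nonneg_right hFle (by positivity)



lemma coeff_bound (f : Polynomial ℂ) (n : ℕ) (hdeg : f.natDegree ≤ n) (C : ℝ)
    (hC : ∀ w : ℂ, Complex.abs w = 1 → Complex.abs (f.eval w) ≤ C) :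
    Complex.abs (f.coeff n) ≤ C := by
  rcases Nat.eq_zero_or_pos n with hn | hn
  · subst hn
    have hf := Polynomial.eq_C_of_natDegree_le_zero hdeg
    have : f.eval 1 = f.coeff 0 := by rw [hf]; simp
    rw [← this]
    exact hC 1 (by simp)
  set A : ℝ := ∑ i ∈ Finset.range n, Complex.abs (f.coeff i) with hA
  have hA0 : 0 ≤ A := Finset.sum_nonneg fun i _ => (Complex.abs.nonneg _)
  have key : ∀ t : ℝ, 1 ≤ t → Complex.abs (f.coeff n) ≤ C + A / t := by
    intro t ht
    have ht0 : (0:ℝ) < t := lt_of_lt_of_le one_pos ht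
    have hT : Complex.abs (t : ℂ) = t := by
      rw [Complex.abs_ofReal, abs_of_pos ht0]
    have h1 : Complex.abs (f.eval (t:ℂ)) ≤ C * t ^ n := by
      have := growth_s14 f n hdeg C hC (t:ℂ) (by rw [hT]; exact ht)
      rwa [hT] at this
    have he : f.eval (t:ℂ) = ∑ i ∈ Finset.range (n+1), f.coeff i * (t:ℂ) ^ i :=
      eval_eq_sum_range' (lt_of_le_of_lt hdeg (Nat.lt_succ_self n)) _
    have he2 : f.coeff n * (t:ℂ)^n = f.eval (t:ℂ) - ∑ i ∈ Finset.range n, f.coeff i * (t:ℂ)^i := by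
      rw [he, Finset.sum_range_succ]; ring
    have hsum : Complex.abs (∑ i ∈ Finset.range n, f.coeff i * (t:ℂ)^i) ≤ A * t^(n-1) := by
      refine le_trans (Complex.abs.sum_le _ _) ?_
      rw [hA, Finset.sum_mul]
      apply Finset.sum_le_sum
      intro i hi
      rw [map_mul, map_pow, hT]
      have h4 : t ^ i ≤ t ^ (n-1) :=
        pow_le_pow_right₀ ht (Nat.le_sub_one_of_lt (Finset.mem_range.mp hi))
      have h0 := Complex.abs.nonneg (f.coeff i)
      nlinarith
    have h3 : Complex.abs (f.coeff n) * t^n ≤ C * t^n + A * t^(n-1) := by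
      have hcc := congrArg Complex.abs he2
      rw [map_mul, map_pow, hT] at hcc
      rw [hcc]
      exact le_trans (Complex.abs.sub_le_add _ _) (add_le_add h1 hsum)
    have htn : (0:ℝ) < t^n := pow_pos ht0 n
    rw [← le_div_iff₀ htn] at h3
    have hpow : t^n = t^(n-1)*t := by
      rw [← pow_succ]; congr 1; omega
    have heq : (C * t^n + A * t^(n-1)) / t^n = C + A / t := by
      rw [hpow]; field_simp
    rwa [heq] at h3
  refine le_of_forall_pos_le_add ?_
  intro ε hε
  have ht1 : (1:ℝ) ≤ max 1 (A/ε) := le_max_left _ _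
  refine le_trans (key _ ht1) ?_
  gcongr
  rw [div_le_iff₀ (lt_of_lt_of_le one_pos ht1)]
  calc A = (A/ε) * ε := by field_simp
    _ ≤ max 1 (A/ε) * ε := by gcongr; exact le_max_right _ _
    _ = ε * max 1 (A/ε) := by ring

lemma derivEval (z : ℂ) (s : Multiset ℂ) (h : ∀ r ∈ s, z ≠ r) :
    (derivative ((s.map (fun r => X - C r)).prod)).eval z =
      ((s.map (fun r => X - C r)).prod).eval z * (s.map (fun r => (z - r)⁻¹)).sum := by
  induction s using Multiset.induction_on with
  | empty => simp
  | cons r t ih =>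
    have hzr : z - r ≠ 0 := sub_ne_zero.mpr (h r (Multiset.mem_cons_self r t))
    have ih' := ih (fun x hx => h x (Multiset.mem_cons_of_mem hx))
    simp only [Multiset.map_cons, Multiset.prod_cons, Multiset.sum_cons, derivative_mul]
    simp only [eval_add, eval_mul, eval_sub, eval_X, eval_C, derivative_sub, derivative_X,
      derivative_C, sub_zero, eval_one, one_mul, ih']
    field_simp

lemma prodEval_ne (z : ℂ) (s : Multiset ℂ) (h : ∀ r ∈ s, z ≠ r) :
    ((s.map (fun r => X - C r)).prod).eval z ≠ 0 := by
  rw [eval_multiset_prod]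
  apply Multiset.prod_ne_zero
  intro h0
  simp only [Multiset.mem_map] at h0
  obtain ⟨q, hq, hq2⟩ := h0
  obtain ⟨r, hr, hr2⟩ := hq
  rw [← hr2] at hq2
  simp only [eval_sub, eval_X, eval_C] at hq2
  exact (sub_ne_zero.mpr (h r hr)) hq2


-- separation lemma
lemma sep (z u u₀ : ℂ) (hz : 1 ≤ Complex.abs z)
    (hu : (Complex.abs z^2 - 1) * Complex.normSq u + 1 < 2 * (z*u).re)
    (hu0 : 2 * (z*u₀).re ≤ (Complex.abs z^2 - 1) * Complex.normSq u₀ + 1) :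
    0 < ((z - ((Complex.abs z^2 - 1):ℝ) * (starRingEnd ℂ) u₀) * (u - u₀)).re := by
  have hd : (0:ℝ) ≤ Complex.abs z^2 - 1 := by nlinarith [Complex.abs.nonneg z]
  have hsq : 0 ≤ Complex.normSq (u - u₀) := Complex.normSq_nonneg _
  simp only [Complex.mul_re, Complex.sub_re, Complex.sub_im, Complex.ofReal_re,
    Complex.ofReal_im, Complex.conj_re, Complex.conj_im, Complex.mul_im,
    Complex.normSq_apply] at *
  nlinarith [hsq, hd]



lemma re_mul_inv (v w : ℂ) : (v * w⁻¹).re = (v * (starRingEnd ℂ) w).re / Complex.normSq w := by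
  rw [Complex.inv_def, ← mul_assoc, div_eq_mul_inv]
  simp [Complex.mul_re]

lemma KI_u (z r : ℂ) (hz : 1 ≤ Complex.abs z) (hr : Complex.abs r < 1) :
    (Complex.abs z^2 - 1) * Complex.normSq ((z-r)⁻¹) + 1 < 2 * (z*(z-r)⁻¹).re := by
  have hzr : z - r ≠ 0 := by
    rw [sub_ne_zero]
    intro h; rw [h] at hz; linarith
  set w := z - r with hw
  have hns : 0 < Complex.normSq w := Complex.normSq_pos.mpr hzr
  have hM : (Complex.abs z^2 - 1) + Complex.normSq w < 2 * (z * (starRingEnd ℂ) w).re := by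
    have h1 : Complex.abs z^2 = Complex.normSq z := Complex.sq_abs z
    have h2 : Complex.normSq r < 1 := by
      rw [← Complex.sq_abs]; nlinarith [Complex.abs.nonneg r]
    rw [h1]
    simp only [hw, Complex.normSq_apply, Complex.mul_re, Complex.sub_re, Complex.sub_im,
      Complex.conj_re, Complex.conj_im] at *
    nlinarith
  rw [re_mul_inv, map_inv₀, ← sub_pos]
  have hE : 2 * ((z * (starRingEnd ℂ) w).re / Complex.normSq w) -
      ((Complex.abs z ^ 2 - 1) * (Complex.normSq w)⁻¹ + 1) =
      (2 * (z * (starRingEnd ℂ) w).re - ((Complex.abs z ^ 2 - 1) + Complex.normSq w)) / Complex.normSq w := by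
    field_simp
  rw [hE]
  exact div_pos (by linarith) hns

lemma KI_u0 (z a : ℂ) (ha : Complex.abs a ≤ 1) (h1 : 1 + a*z ≠ 0) :
    2 * (z*(a/(1+a*z))).re ≤ (Complex.abs z^2 - 1) * Complex.normSq (a/(1+a*z)) + 1 := by
  set w := 1 + a*z with hw
  have hns : 0 < Complex.normSq w := Complex.normSq_pos.mpr h1
  have hM : 2 * ((z*a) * (starRingEnd ℂ) w).re ≤
      (Complex.abs z^2 - 1) * Complex.normSq a + Complex.normSq w := by
    have h1' : Complex.abs z^2 = Complex.normSq z := Complex.sq_abs z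
    have h2 : Complex.normSq a ≤ 1 := by
      rw [← Complex.sq_abs]; nlinarith [Complex.abs.nonneg a]
    rw [h1']
    simp only [hw, Complex.normSq_apply, Complex.mul_re, Complex.mul_im, Complex.add_re,
      Complex.add_im, Complex.one_re, Complex.one_im, Complex.conj_re, Complex.conj_im] at *
    nlinarith
  have hdiv : z * (a / w) = (z*a) * w⁻¹ := by field_simp
  have hdiv2 : a / w = a * w⁻¹ := div_eq_mul_inv a w
  rw [hdiv, hdiv2, re_mul_inv]
  rw [map_mul, map_inv₀, ← sub_nonneg]
  have hE : (Complex.abs z ^ 2 - 1) * (Complex.normSq a * (Complex.normSq w)⁻¹) + 1 -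
      2 * ((z * a * (starRingEnd ℂ) w).re / Complex.normSq w) =
      ((Complex.abs z ^ 2 - 1) * Complex.normSq a + Complex.normSq w
        - 2 * ((z*a) * (starRingEnd ℂ) w).re) / Complex.normSq w := by
    field_simp
  rw [hE]
  exact div_nonneg (by linarith) (le_of_lt hns)


lemma msum_sub (s : Multiset ℂ) (f : ℂ → ℂ) (u₀ : ℂ) :
    (s.map (fun r => f r - u₀)).sum = (s.map f).sum - (s.card : ℂ) * u₀ := by
  induction s using Multiset.induction_on with
  | empty => simp
  | cons r t ih => simp [ih]; ring

lemma msum_re_pos (s : Multiset ℂ) (hne : s ≠ 0) (g : ℂ → ℂ)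
    (h : ∀ r ∈ s, 0 < (g r).re) : 0 < ((s.map g).sum).re := by
  induction s using Multiset.induction_on with
  | empty => exact absurd rfl hne
  | cons r t ih =>
    by_cases ht0 : t = 0
    · subst ht0; simpa using h r (Multiset.mem_cons_self r 0)
    · simp only [Multiset.map_cons, Multiset.sum_cons, Complex.add_re]
      have h1 := h r (Multiset.mem_cons_self r t)
      linarith [ih ht0 (fun x hx => h x (Multiset.mem_cons_of_mem hx))]

lemma core (s : Multiset ℂ) (hs : ∀ r ∈ s, Complex.abs r < 1) (hne : s ≠ 0)
    (a z : ℂ) (ha : Complex.abs a ≤ 1) (hz : 1 ≤ Complex.abs z) :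
    (1 + a*z) * ((s.map (fun r => (z - r)⁻¹)).sum) ≠ (s.card : ℂ) * a := by
  have hcard : s.card ≠ 0 := by
    intro h; exact hne (Multiset.card_eq_zero.mp h)
  by_cases haz : 1 + a*z = 0
  · have ha0 : a ≠ 0 := by
      intro h; rw [h] at haz; simp at haz
    rw [haz, zero_mul]
    exact fun h => (mul_ne_zero (Nat.cast_ne_zero.mpr hcard) ha0) h.symm
  · intro hEq
    set u₀ := a/(1+a*z) with hu₀
    set w := z - ((Complex.abs z^2 - 1):ℝ) * (starRingEnd ℂ) u₀ with hwdef
    have hS : (s.map (fun r => (z - r)⁻¹)).sum = (s.card : ℂ) * u₀ := by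
      rw [hu₀, mul_div_assoc'] at *
      field_simp at hEq ⊢
      rw [mul_comm] at hEq
      linear_combination hEq
    have hpos : 0 < ((s.map (fun r => w * ((z - r)⁻¹ - u₀))).sum).re := by
      apply msum_re_pos _ (by simpa using hne)
      intro r hr
      exact sep z ((z-r)⁻¹) u₀ hz (KI_u z r hz (hs r hr)) (KI_u0 z a ha haz)
    rw [Multiset.sum_map_mul_left, msum_sub, hS, sub_self, mul_zero] at hpos
    simp at hpos


lemma poly_zero_of_sphere_zero (f : Polynomial ℂ) (n : ℕ) (hdeg : f.natDegree ≤ n)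
    (hC : ∀ w : ℂ, Complex.abs w = 1 → Complex.abs (f.eval w) ≤ 0) : f = 0 := by
  apply Polynomial.eq_zero_of_infinite_isRoot
  apply Set.infinite_of_injective_forall_mem (f := fun k : ℕ => ((k+1 : ℕ) : ℂ))
  · intro i j hij
    simp only [Nat.cast_inj] at hij
    exact Nat.succ_injective (by exact_mod_cast hij)
  · intro k
    have h1 : (1:ℝ) ≤ Complex.abs ((k+1 : ℕ) : ℂ) := by
      rw [Complex.abs_natCast]; exact_mod_cast Nat.succ_le_succ (Nat.zero_le k)
    have h2 := growth_s14 f n hdeg 0 hC _ h1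
    rw [zero_mul] at h2
    have h0 : Complex.abs (f.eval ((k+1:ℕ):ℂ)) = 0 :=
      le_antisymm h2 (Complex.abs.nonneg _)
    simpa [Polynomial.IsRoot] using (Complex.abs.eq_zero.mp h0)

lemma main2 (f : Polynomial ℂ) (n : ℕ) (hn : 1 ≤ n) (hdeg : f.natDegree ≤ n) (C : ℝ)
    (hC : ∀ w : ℂ, Complex.abs w = 1 → Complex.abs (f.eval w) ≤ C)
    (a z : ℂ) (ha : Complex.abs a ≤ 1) (hz : 1 ≤ Complex.abs z) :
    Complex.abs ((1 + a*z) * (derivative f).eval z - (n:ℂ)*a*(f.eval z)) ≤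
      (n:ℝ) * C * Complex.abs z ^ (n-1) := by
  obtain ⟨m, rfl⟩ : ∃ m, n = m + 1 := ⟨n - 1, by omega⟩
  simp only [Nat.add_sub_cancel]
  have hC0 : 0 ≤ C := le_trans (Complex.abs.nonneg _) (hC 1 (by simp))
  rcases eq_or_lt_of_le hC0 with hCeq | hCpos
  · have hf0 : f = 0 := poly_zero_of_sphere_zero f (m+1) hdeg (by rw [hCeq]; exact hC)
    subst hf0
    simp [← hCeq]
  · by_contra hcon
    push_neg at hcon
    have hz0 : (0:ℝ) < Complex.abs z := lt_of_lt_of_le one_pos hz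
    have hzne : z ≠ 0 := by
      intro h; rw [h] at hz0; simp at hz0
    have hzpow : (0:ℝ) < Complex.abs z ^ m := pow_pos hz0 _
    set N : ℂ := (1 + a*z) * (derivative f).eval z - ((m+1:ℕ):ℂ)*a*(f.eval z) with hN
    set D : ℂ := ((m+1:ℕ):ℂ) * (C:ℂ) * z^m with hD
    have hDabs : Complex.abs D = ((m+1:ℕ):ℝ) * C * Complex.abs z ^ m := by
      rw [hD, map_mul, map_mul, map_pow, Complex.abs_natCast, Complex.abs_ofReal,
        abs_of_pos hCpos]
    have hD0 : D ≠ 0 := by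
      rw [hD]
      exact mul_ne_zero (mul_ne_zero (Nat.cast_ne_zero.mpr (by omega))
        (Complex.ofReal_ne_zero.mpr (ne_of_gt hCpos))) (pow_ne_zero _ hzne)
    set α : ℂ := N / D with hα
    have hαabs : 1 < Complex.abs α := by
      rw [hα, map_div₀, hDabs, lt_div_iff₀ (by positivity)]
      simpa using hcon
    have hND2 : α * (((m+1:ℕ):ℂ) * (C:ℂ) * z^m) =
        (1 + a*z) * (derivative f).eval z - ((m+1:ℕ):ℂ)*a*(f.eval z) := by
      rw [← hD, ← hN]; exact div_mul_cancel₀ N hD0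
    clear_value α
    clear_value N D
    clear hα hN hD hDabs hD0 hcon
    set G : Polynomial ℂ := f - Polynomial.C (α * C) * X^(m+1) with hG
    have hGcoeff : G.coeff (m+1) = f.coeff (m+1) - α * C := by
      rw [hG, coeff_sub, coeff_C_mul, coeff_X_pow]
      simp
    have hfc : Complex.abs (f.coeff (m+1)) ≤ C := coeff_bound f (m+1) hdeg C hC
    have hGcne : G.coeff (m+1) ≠ 0 := by
      rw [hGcoeff, sub_ne_zero]
      intro h
      have h2 : Complex.abs (α * C) ≤ C := h ▸ hfc
      rw [map_mul, Complex.abs_ofReal, abs_of_pos hCpos] at h2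
      nlinarith
    have hGdeg : G.natDegree = m+1 := by
      apply le_antisymm
      · apply le_trans (natDegree_sub_le _ _)
        simp only [max_le_iff]
        exact ⟨hdeg, le_trans (natDegree_C_mul_le _ _) (by simp)⟩
      · exact le_natDegree_of_ne_zero hGcne
    have hG0 : G ≠ 0 := fun h => hGcne (by rw [h]; simp)
    have hcard : G.roots.card = m+1 := by
      rw [← hGdeg]
      exact splits_iff_card_roots.mp (IsAlgClosed.splits G)
    have hroots : ∀ r ∈ G.roots, Complex.abs r < 1 := by
      intro r hr
      by_contra hge
      push_neg at hge
      have hre : G.eval r = 0 := (mem_roots hG0).mp hr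
      have hre2 : f.eval r - α * C * r^(m+1) = 0 := by simpa [hG] using hre
      have heval : f.eval r = α * (C:ℂ) * r ^ (m+1) := sub_eq_zero.mp hre2
      have h1 : Complex.abs (f.eval r) ≤ C * Complex.abs r ^ (m+1) :=
        growth_s14 f (m+1) hdeg C hC r hge
      have h2 : Complex.abs (f.eval r) = Complex.abs α * C * Complex.abs r ^ (m+1) := by
        rw [heval, map_mul, map_mul, map_pow, Complex.abs_ofReal, abs_of_pos hCpos]
      have h3 : (0:ℝ) < Complex.abs r ^ (m+1) := pow_pos (lt_of_lt_of_le one_pos hge) _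
      nlinarith [mul_pos (sub_pos.mpr hαabs) (mul_pos hCpos h3)]
    have hlead : G.leadingCoeff ≠ 0 := leadingCoeff_ne_zero.mpr hG0
    have hzr : ∀ r ∈ G.roots, z ≠ r := by
      intro r hr h
      have h5 := hroots r hr
      rw [← h] at h5
      linarith
    have hsne : G.roots ≠ 0 := by
      intro h; rw [h] at hcard; simp at hcard
    have hcore := core G.roots hroots hsne a z ha hz
    rw [hcard] at hcore
    have hfact := C_leadingCoeff_mul_prod_multiset_X_sub_C (p := G) (by rw [hcard, hGdeg])
    have hGne : (1 + a*z) * (derivative G).eval z - ((m+1:ℕ):ℂ)*a*(G.eval z) ≠ 0 := by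
      conv_lhs => rw [← hfact]
      rw [derivative_C_mul, eval_mul, eval_C, eval_mul, eval_C, derivEval z _ hzr]
      have hre : (1 + a*z) * (G.leadingCoeff *
            (((G.roots.map (fun r => X - Polynomial.C r)).prod).eval z *
              (G.roots.map (fun r => (z - r)⁻¹)).sum)) -
          ((m+1:ℕ):ℂ)*a*(G.leadingCoeff * ((G.roots.map (fun r => X - Polynomial.C r)).prod).eval z) =
          G.leadingCoeff * ((G.roots.map (fun r => X - Polynomial.C r)).prod).eval z *
            ((1 + a*z) * (G.roots.map (fun r => (z - r)⁻¹)).sum - ((m+1:ℕ):ℂ)*a) := by ring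
      rw [hre]
      exact mul_ne_zero (mul_ne_zero hlead (prodEval_ne z _ hzr)) (sub_ne_zero.mpr hcore)
    apply hGne
    have hGev : G.eval z = f.eval z - α * C * z^(m+1) := by simp [hG]
    have hG'ev : (derivative G).eval z =
        (derivative f).eval z - α * C * (((m+1:ℕ):ℂ) * z^m) := by
      rw [hG, derivative_sub, derivative_C_mul, derivative_X_pow]
      simp [mul_assoc]
    rw [hG'ev, hGev]
    linear_combination (-1 : ℂ) * hND2


lemma factor_mono (R : ℝ) (hR : 1 ≤ R) (w r : ℂ) (hw : Complex.abs w = 1)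
    (hr : Complex.abs r < 1) :
    Complex.abs (w - r) ≤ Complex.abs ((R:ℂ)*w - r) ∧
    (1 < R → Complex.abs (w - r) < Complex.abs ((R:ℂ)*w - r)) := by
  have h1 : Complex.normSq w = 1 := by
    rw [← Complex.sq_abs, hw]; norm_num
  have htle : (w * (starRingEnd ℂ) r).re ≤ Complex.abs r :=
    le_trans (Complex.re_le_abs _) (le_of_eq (by rw [map_mul, Complex.abs_conj, hw, one_mul]))
  have hident : Complex.normSq ((R:ℂ)*w - r) - Complex.normSq (w - r) =
      (R-1)*((R+1)*Complex.normSq w - 2*((w * (starRingEnd ℂ) r).re)) := by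
    simp only [Complex.normSq_apply, Complex.mul_re, Complex.mul_im, Complex.sub_re,
      Complex.sub_im, Complex.conj_re, Complex.conj_im, Complex.ofReal_re, Complex.ofReal_im]
    ring
  rw [h1] at hident
  have hfac : (0:ℝ) ≤ (R+1)*1 - 2*((w * (starRingEnd ℂ) r).re) := by nlinarith
  have hns : Complex.normSq (w - r) ≤ Complex.normSq ((R:ℂ)*w - r) := by
    nlinarith [mul_nonneg (by linarith : (0:ℝ) ≤ R - 1) hfac]
  have hns2 : 1 < R → Complex.normSq (w - r) < Complex.normSq ((R:ℂ)*w - r) := by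
    intro hR1
    nlinarith [mul_pos (by linarith : (0:ℝ) < R - 1) (by nlinarith : (0:ℝ) < (R+1)*1 - 2*((w * (starRingEnd ℂ) r).re))]
  constructor
  · rw [Complex.abs_apply, Complex.abs_apply]
    exact Real.sqrt_le_sqrt hns
  · intro hR1
    rw [Complex.abs_apply, Complex.abs_apply]
    exact Real.sqrt_lt_sqrt (Complex.normSq_nonneg _) (hns2 hR1)

lemma prod_mono (R : ℝ) (hR : 1 ≤ R) (w : ℂ) (hw : Complex.abs w = 1)
    (s : Multiset ℂ) (hs : ∀ r ∈ s, Complex.abs r < 1) :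
    Complex.abs (((s.map (fun r => X - C r)).prod).eval w) ≤
      Complex.abs (((s.map (fun r => X - C r)).prod).eval ((R:ℂ)*w)) ∧
    (1 < R → s ≠ 0 → Complex.abs (((s.map (fun r => X - C r)).prod).eval w) <
      Complex.abs (((s.map (fun r => X - C r)).prod).eval ((R:ℂ)*w))) := by
  induction s using Multiset.induction_on with
  | empty => simp
  | cons r t ih =>
    have hr := hs r (Multiset.mem_cons_self r t)
    have ht : ∀ x ∈ t, Complex.abs x < 1 := fun x hx => hs x (Multiset.mem_cons_of_mem hx)
    have iht := ih ht
    have hfm := factor_mono R hR w r hw hr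
    set Pw := Complex.abs (((t.map (fun x => X - C x)).prod).eval w) with hPw
    set PRw := Complex.abs (((t.map (fun x => X - C x)).prod).eval ((R:ℂ)*w)) with hPRw
    have htpos : 0 < Pw := by
      rw [hPw, AbsoluteValue.pos_iff]
      apply prodEval_ne w t
      intro x hx h
      rw [h] at hw
      exact absurd hw (ne_of_lt (ht x hx))
    simp only [Multiset.map_cons, Multiset.prod_cons, eval_mul, eval_sub, eval_X, eval_C,
      map_mul, ← hPw, ← hPRw]
    constructor
    · exact mul_le_mul hfm.1 iht.1 (le_of_lt htpos) (Complex.abs.nonneg _)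
    · intro hR1 _
      have s1 : Complex.abs (w - r) * Pw < Complex.abs ((R:ℂ)*w - r) * Pw :=
        mul_lt_mul_of_pos_right (hfm.2 hR1) htpos
      have s2 : Complex.abs ((R:ℂ)*w - r) * Pw ≤ Complex.abs ((R:ℂ)*w - r) * PRw :=
        mul_le_mul_of_nonneg_left iht.1 (Complex.abs.nonneg _)
      linarith

lemma aziz (p : Polynomial ℂ) (n : ℕ) (hn : 1 ≤ n) (hdeg : p.natDegree ≤ n)
    (β : ℂ) (hβ : Complex.abs β ≤ 1) (R : ℝ) (hR : 1 ≤ R) (M : ℝ)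
    (hM : ∀ w : ℂ, Complex.abs w = 1 → Complex.abs (p.eval w) ≤ M)
    (w : ℂ) (hw : Complex.abs w = 1) :
    Complex.abs (p.eval ((R:ℂ)*w) - β * p.eval w) ≤ Complex.abs ((R:ℂ)^n - β) * M := by
  have hM0 : 0 ≤ M := le_trans (Complex.abs.nonneg _) (hM 1 (by simp))
  have hR0 : (0:ℝ) < R := lt_of_lt_of_le one_pos hR
  have hRw : Complex.abs ((R:ℂ)*w) = R := by
    rw [map_mul, Complex.abs_ofReal, hw, mul_one, abs_of_pos hR0]
  have hw0 : w ≠ 0 := by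
    intro h; rw [h] at hw; simp at hw
  by_cases hRβ : ((R:ℂ))^n = β
  · -- then R = 1 and β = 1
    have hR1 : R = 1 := by
      by_contra hne
      have hR1' : 1 < R := lt_of_le_of_ne hR (Ne.symm hne)
      have : (1:ℝ) < R^n := one_lt_pow₀ hR1' (by omega)
      have hβa : Complex.abs β = R^n := by
        rw [← hRβ, map_pow, Complex.abs_ofReal, abs_of_pos hR0]
      rw [hβa] at hβ
      linarith
    have hβ1 : β = 1 := by
      rw [← hRβ, hR1]; simp
    rw [hβ1, hR1]
    simp
  · by_contra hcon
    push_neg at hcon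
    have hMpos : 0 < M := by
      rcases eq_or_lt_of_le hM0 with h0 | h; swap
      · exact h
      exfalso
      have h1 : Complex.abs (p.eval ((R:ℂ)*w)) ≤ M * R^n := by
        have := growth_s14 p n hdeg M hM ((R:ℂ)*w) (by rw [hRw]; exact hR)
        rwa [hRw] at this
      rw [← h0] at h1
      simp only [zero_mul] at h1
      have h2 := hM w hw
      rw [← h0] at h2
      have h3 : Complex.abs (p.eval ((R:ℂ)*w) - β * p.eval w) ≤ 0 := by
        refine le_trans (Complex.abs.sub_le_add _ _) ?_
        rw [map_mul]
        nlinarith [Complex.abs.nonneg (p.eval ((R:ℂ)*w)), Complex.abs.nonneg (p.eval w),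
          Complex.abs.nonneg β]
      rw [← h0, mul_zero] at hcon
      linarith
    set den : ℂ := (M:ℂ) * (((R:ℂ))^n - β) * w^n with hden
    have hden0 : den ≠ 0 := by
      rw [hden]
      exact mul_ne_zero (mul_ne_zero (Complex.ofReal_ne_zero.mpr (ne_of_gt hMpos))
        (sub_ne_zero.mpr hRβ)) (pow_ne_zero _ hw0)
    have hdenabs : Complex.abs den = M * Complex.abs ((R:ℂ)^n - β) := by
      rw [hden, map_mul, map_mul, map_pow, hw, one_pow, mul_one, Complex.abs_ofReal,
        abs_of_pos hMpos]
    set lam : ℂ := (p.eval ((R:ℂ)*w) - β * p.eval w) / den with hlam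
    have hlamabs : 1 < Complex.abs lam := by
      rw [hlam, map_div₀, hdenabs, lt_div_iff₀ (mul_pos hMpos (Complex.abs.pos (sub_ne_zero.mpr hRβ)))]
      rw [one_mul, mul_comm]
      exact hcon
    have hlamden : lam * den = p.eval ((R:ℂ)*w) - β * p.eval w := div_mul_cancel₀ _ hden0
    set s : Polynomial ℂ := Polynomial.C (lam * M) * X^n - p with hs
    have hscoeff : s.coeff n = lam * M - p.coeff n := by
      rw [hs, coeff_sub, coeff_C_mul, coeff_X_pow]
      simp
    have hpc : Complex.abs (p.coeff n) ≤ M := coeff_bound p n hdeg M hM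
    have hscne : s.coeff n ≠ 0 := by
      rw [hscoeff, sub_ne_zero]
      intro h
      have h2 : Complex.abs (lam * M) ≤ M := h.symm ▸ hpc
      rw [map_mul, Complex.abs_ofReal, abs_of_pos hMpos] at h2
      nlinarith
    have hsdeg : s.natDegree = n := by
      apply le_antisymm
      · apply le_trans (natDegree_sub_le _ _)
        simp only [max_le_iff]
        exact ⟨le_trans (natDegree_C_mul_le _ _) (by simp), hdeg⟩
      · exact le_natDegree_of_ne_zero hscne
    have hs0 : s ≠ 0 := fun h => hscne (by rw [h]; simp)
    have hcard : s.roots.card = n := by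
      rw [← hsdeg]
      exact splits_iff_card_roots.mp (IsAlgClosed.splits s)
    have hroots : ∀ r ∈ s.roots, Complex.abs r < 1 := by
      intro r hr
      by_contra hge
      push_neg at hge
      have hre : s.eval r = 0 := (mem_roots hs0).mp hr
      have hre2 : lam * M * r^n - p.eval r = 0 := by simpa [hs] using hre
      have heval : p.eval r = lam * (M:ℂ) * r ^ n := (sub_eq_zero.mp hre2).symm
      have h1 : Complex.abs (p.eval r) ≤ M * Complex.abs r ^ n := growth_s14 p n hdeg M hM r hge
      have h2 : Complex.abs (p.eval r) = Complex.abs lam * M * Complex.abs r ^ n := by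
        rw [heval, map_mul, map_mul, map_pow, Complex.abs_ofReal, abs_of_pos hMpos]
      have h3 : (0:ℝ) < Complex.abs r ^ n := pow_pos (lt_of_lt_of_le one_pos hge) _
      nlinarith [mul_pos (sub_pos.mpr hlamabs) (mul_pos hMpos h3)]
    have hsw : s.eval w ≠ 0 := by
      intro h
      have h2 : lam * M * w^n = p.eval w := by
        have : lam * M * w^n - p.eval w = 0 := by simpa [hs] using h
        exact sub_eq_zero.mp this
      have h3 : Complex.abs (lam * (M:ℂ) * w^n) = Complex.abs lam * M := by
        rw [map_mul, map_mul, map_pow, hw, one_pow, mul_one, Complex.abs_ofReal,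
          abs_of_pos hMpos]
      have h4 := hM w hw
      rw [← h2, h3] at h4
      nlinarith
    have hfact := C_leadingCoeff_mul_prod_multiset_X_sub_C (p := s) (by rw [hcard, hsdeg])
    have hlead : s.leadingCoeff ≠ 0 := leadingCoeff_ne_zero.mpr hs0
    have hmono := prod_mono R hR w hw s.roots hroots
    have habs_le : Complex.abs (s.eval w) ≤ Complex.abs (s.eval ((R:ℂ)*w)) := by
      conv_lhs => rw [← hfact]
      conv_rhs => rw [← hfact]
      simp only [eval_mul, eval_C, map_mul]
      exact mul_le_mul_of_nonneg_left hmono.1 (Complex.abs.nonneg _)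
    have hid : s.eval ((R:ℂ)*w) = β * s.eval w := by
      simp only [hs, eval_sub, eval_mul, eval_C, eval_pow, eval_X]
      rw [mul_pow]
      linear_combination hlamden
    rcases eq_or_lt_of_le hR with hR1 | hR1
    · -- R = 1
      have hRC : ((R:ℝ):ℂ) = 1 := by rw [← hR1]; simp
      rw [hRC, one_mul] at hid
      have hβ1 : β = 1 := by
        have h5 : (1 - β) * s.eval w = 0 := by linear_combination hid
        rcases mul_eq_zero.mp h5 with h6 | h6
        · linear_combination -h6
        · exact absurd h6 hsw
      rw [hRC, one_pow] at hRβ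
      exact absurd hβ1.symm hRβ
    · -- 1 < R
      have hsne : s.roots ≠ 0 := by
        intro h; rw [h] at hcard; simp at hcard; omega
      have hstrict : Complex.abs (s.eval w) < Complex.abs (s.eval ((R:ℂ)*w)) := by
        conv_lhs => rw [← hfact]
        conv_rhs => rw [← hfact]
        simp only [eval_mul, eval_C, map_mul]
        exact mul_lt_mul_of_pos_left (hmono.2 hR1 hsne) (Complex.abs.pos hlead)
      have h7 : Complex.abs (s.eval ((R:ℂ)*w)) ≤ Complex.abs (s.eval w) := by
        rw [hid, map_mul]
        nlinarith [Complex.abs.nonneg (s.eval w)]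
      linarith


lemma maxSphere_bound (p : Polynomial ℂ) :
    ∀ w : ℂ, Complex.abs w = 1 → Complex.abs (p.eval w) ≤ maxSphere p := by
  intro w hw
  have hbdd : BddAbove ((fun w => ‖p.eval w‖) '' sphere (0:ℂ) 1) :=
    ((isCompact_sphere (0:ℂ) 1).image
      (continuous_norm.comp (Polynomial.continuous p))).bddAbove
  apply le_csSup hbdd
  exact ⟨w, by simp [mem_sphere_iff_norm, Complex.norm_eq_abs, hw], rfl⟩

theorem stmt_14 (n : ℕ) (p : Polynomial ℂ) (hp : p.natDegree = n)
    (β a : ℂ) (hβ : ‖β‖ ≤ 1) (ha : ‖a‖ ≤ 1)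
    (R : ℝ) (hR : 1 ≤ R) :
    ∀ z : ℂ, 1 ≤ ‖z‖ →
      ‖(1 + a * z) * (R * (derivative p).eval (R * z) - β * (derivative p).eval z) -
          n * a * (p.eval (R * z) - β * p.eval z)‖ ≤
        n * ‖(R : ℂ) ^ n - β‖ * (‖z‖) ^ (n - 1) * maxSphere p := by
  simp only [Complex.norm_eq_abs] at hβ ha ⊢
  intro z hz
  rcases Nat.eq_zero_or_pos n with hn0 | hn
  · subst hn0
    obtain ⟨c, hc⟩ := Polynomial.natDegree_eq_zero.mp hp
    have hd0 : derivative p = 0 := by rw [← hc]; simp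
    rw [hd0]
    simp only [eval_zero, mul_zero, zero_mul, sub_zero, sub_self, Nat.cast_zero, map_zero]
    exact le_refl 0
  · set M := maxSphere p with hM
    have hMb := maxSphere_bound p
    set q : Polynomial ℂ := p.comp (Polynomial.C ((R:ℂ)) * X) - Polynomial.C β * p with hq
    have hqev : ∀ x : ℂ, q.eval x = p.eval ((R:ℂ)*x) - β * p.eval x := by
      intro x
      rw [hq, eval_sub, eval_comp, eval_mul, eval_C, eval_X, eval_mul, eval_C]
    have hqdeg : q.natDegree ≤ n := by
      apply le_trans (natDegree_sub_le _ _)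
      simp only [max_le_iff]
      constructor
      · refine le_trans natDegree_comp_le ?_
        have h1 : (Polynomial.C ((R:ℂ)) * X).natDegree ≤ 1 :=
          le_trans (natDegree_C_mul_le _ _) (by simp)
        calc p.natDegree * (Polynomial.C ((R:ℂ)) * X).natDegree ≤ n * 1 := by
              exact Nat.mul_le_mul (le_of_eq hp) h1
          _ = n := by omega
      · exact le_trans (natDegree_C_mul_le _ _) (le_of_eq hp)
    have hqsph : ∀ w : ℂ, Complex.abs w = 1 →
        Complex.abs (q.eval w) ≤ Complex.abs ((R:ℂ)^n - β) * M := by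
      intro w hw
      rw [hqev]
      exact aziz p n hn (le_of_eq hp) β hβ R hR M hMb w hw
    have hq'ev : (derivative q).eval z =
        (R:ℂ) * (derivative p).eval ((R:ℂ)*z) - β * (derivative p).eval z := by
      rw [hq, derivative_sub, derivative_comp, derivative_C_mul_X, derivative_C_mul]
      simp only [eval_sub, eval_mul, eval_C, eval_comp, eval_X]
    have hmain := main2 q n hn hqdeg (Complex.abs ((R:ℂ)^n - β) * M) hqsph a z ha hz
    rw [hq'ev, hqev z] at hmain
    have heq : (n:ℝ) * (Complex.abs ((R:ℂ)^n - β) * M) * Complex.abs z ^ (n-1) =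
        (n:ℝ) * Complex.abs ((R:ℂ)^n - β) * Complex.abs z ^ (n-1) * M := by ring
    rw [heq] at hmain
    exact hmain
end

section
/- Let P be a polynomial of degree n with no zeros in the open unit disk. Then for every β ∈ ℂ with |β| ≤ 1, R > 1, a with |a| ≤ 1, and z with |z| ≥ 1: |(1+az)[RP'(Rz) − βP'(z)] − n a [P(Rz) − βP(z)]| ≤ ((n|R^n − β||z|^{n−1} + n|1−β||a|)/2) · max_{|w|=1}|P(w)|. -/
open Polynomial Metric Set

open scoped ComplexConjugate

namespace Stmt17aux

noncomputable def Wp (R β : ℂ) (p : ℂ[X]) : ℂ[X] := p.comp (C R * X) - C β * p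

noncomputable def Tp (R β a : ℂ) (n : ℕ) (p : ℂ[X]) : ℂ[X] :=
  (1 + C a * X) * derivative (Wp R β p) - C ((n : ℂ) * a) * Wp R β p

theorem eval_Wp (R β : ℂ) (p : ℂ[X]) (z : ℂ) :
    (Wp R β p).eval z = p.eval (R * z) - β * p.eval z := by
  simp [Wp]

theorem eval_derivative_Wp (R β : ℂ) (p : ℂ[X]) (z : ℂ) :
    (derivative (Wp R β p)).eval z
      = R * (derivative p).eval (R * z) - β * (derivative p).eval z := by
  simp [Wp, derivative_comp]

theorem eval_Tp (R β a : ℂ) (n : ℕ) (p : ℂ[X]) (z : ℂ) :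
    (Tp R β a n p).eval z
      = (1 + a * z) * (R * (derivative p).eval (R * z) - β * (derivative p).eval z)
        - (n : ℂ) * a * (p.eval (R * z) - β * p.eval z) := by
  simp only [Tp, eval_sub, eval_mul, eval_add, eval_one, eval_C, eval_X,
    eval_derivative_Wp, eval_Wp]

noncomputable def Qop (n : ℕ) (p : ℂ[X]) : ℂ[X] :=
  ∑ k ∈ Finset.range (n + 1), C (conj (p.coeff (n - k))) * X ^ k

theorem coeff_Qop (n : ℕ) (p : ℂ[X]) {k : ℕ} (hk : k ≤ n) :
    (Qop n p).coeff k = conj (p.coeff (n - k)) := by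
  rw [Qop, finset_sum_coeff]
  rw [Finset.sum_eq_single k]
  · simp
  · intro b _ hb
    simp [coeff_C_mul, coeff_X_pow, hb, Ne.symm hb]
  · intro h
    exact absurd (Finset.mem_range.mpr (Nat.lt_succ_of_le hk)) h

theorem natDegree_Qop_le (n : ℕ) (p : ℂ[X]) : (Qop n p).natDegree ≤ n := by
  apply natDegree_sum_le_of_forall_le
  intro k hk
  apply le_trans (natDegree_C_mul_le _ _)
  simpa using Nat.lt_succ_iff.mp (Finset.mem_range.mp hk)

theorem coeff_Qop_of_gt (n : ℕ) (p : ℂ[X]) {k : ℕ} (hk : n < k) :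
    (Qop n p).coeff k = 0 :=
  coeff_eq_zero_of_natDegree_lt (lt_of_le_of_lt (natDegree_Qop_le n p) hk)

theorem Qop_Qop (n : ℕ) (p : ℂ[X]) (hp : p.natDegree ≤ n) : Qop n (Qop n p) = p := by
  ext k
  rcases le_or_gt k n with hk | hk
  · rw [coeff_Qop n _ hk, coeff_Qop n p (Nat.sub_le n k), Nat.sub_sub_self hk,
      Complex.conj_conj]
  · rw [coeff_Qop_of_gt n _ hk, coeff_eq_zero_of_natDegree_lt (lt_of_le_of_lt hp hk)]

theorem Qop_sub (n : ℕ) (p q : ℂ[X]) : Qop n (p - q) = Qop n p - Qop n q := by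
  simp [Qop, ← Finset.sum_sub_distrib, map_sub, sub_mul]

theorem Qop_C (n : ℕ) (μ : ℂ) : Qop n (C μ) = C (conj μ) * X ^ n := by
  rw [Qop, Finset.sum_eq_single n]
  · simp
  · intro b hb hbn
    have : n - b ≠ 0 := by
      rw [Finset.mem_range] at hb; omega
    simp [coeff_C, this]
  · simp

theorem eval_Qop (n : ℕ) (p : ℂ[X]) (hp : p.natDegree ≤ n) (v : ℂ) (hv : v ≠ 0) :
    (Qop n p).eval v = v ^ n * conj (p.eval ((conj v)⁻¹)) := by
  have hv' : (conj v : ℂ) ≠ 0 := by simpa using hv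
  rw [Qop, eval_finset_sum]
  simp only [eval_mul, eval_C, eval_pow, eval_X]
  rw [← Finset.sum_range_reflect]
  rw [eval_eq_sum_range' (Nat.lt_succ_of_le hp), map_sum, Finset.mul_sum]
  apply Finset.sum_congr rfl
  intro j hj
  rw [Finset.mem_range, Nat.lt_succ_iff] at hj
  have h1 : n + 1 - 1 - j = n - j := by omega
  rw [h1, Nat.sub_sub_self hj, map_mul, map_pow, map_inv₀, Complex.conj_conj,
    pow_sub₀ v hv hj]
  field_simp
  rw [mul_assoc, ← mul_pow, mul_one_div_cancel hv, one_pow, mul_one]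

theorem eval_eq_prod_roots {p : ℂ[X]} (w : ℂ) :
    p.eval w = p.leadingCoeff * ((p.roots.map (fun ζ => w - ζ)).prod) := by
  conv_lhs => rw [(IsAlgClosed.splits p).eq_prod_roots]
  rw [eval_mul, eval_C, eval_multiset_prod, Multiset.map_map]
  congr 1
  refine congrArg Multiset.prod (Multiset.map_congr rfl ?_)
  intro ζ _; simp

theorem card_roots_complex {p : ℂ[X]} : p.roots.card = p.natDegree :=
  (splits_iff_card_roots).mp (IsAlgClosed.splits p)

theorem abs_multiset_prod (s : Multiset ℂ) :
    ‖s.prod‖ = (s.map (‖·‖)).prod := by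
  induction s using Multiset.induction with
  | empty => simp
  | cons a t ih => simp [ih]

theorem prod_map_nonneg {s : Multiset ℂ} {f : ℂ → ℝ} (h : ∀ x ∈ s, 0 ≤ f x) :
    0 ≤ (s.map f).prod := by
  induction s using Multiset.induction with
  | empty => simp
  | cons a t ih =>
    simp only [Multiset.map_cons, Multiset.prod_cons]
    exact mul_nonneg (h a (Multiset.mem_cons_self a t))
      (ih fun x hx => h x (Multiset.mem_cons_of_mem hx))

theorem prod_map_pos {s : Multiset ℂ} {f : ℂ → ℝ} (h : ∀ x ∈ s, 0 < f x) :
    0 < (s.map f).prod := by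
  induction s using Multiset.induction with
  | empty => simp
  | cons a t ih =>
    simp only [Multiset.map_cons, Multiset.prod_cons]
    exact mul_pos (h a (Multiset.mem_cons_self a t))
      (ih fun x hx => h x (Multiset.mem_cons_of_mem hx))

theorem prod_map_le {s : Multiset ℂ} {f g : ℂ → ℝ} (h0 : ∀ x ∈ s, 0 ≤ f x)
    (h : ∀ x ∈ s, f x ≤ g x) : (s.map f).prod ≤ (s.map g).prod := by
  induction s using Multiset.induction with
  | empty => simp
  | cons a t ih =>
    simp only [Multiset.map_cons, Multiset.prod_cons]
    have hf0 := fun x hx => h0 x (Multiset.mem_cons_of_mem hx)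
    refine mul_le_mul (h a (Multiset.mem_cons_self a t))
      (ih hf0 (fun x hx => h x (Multiset.mem_cons_of_mem hx)))
      (prod_map_nonneg hf0)
      (le_trans (h0 a (Multiset.mem_cons_self a t)) (h a (Multiset.mem_cons_self a t)))

theorem prod_map_lt {s : Multiset ℂ} {f g : ℂ → ℝ} (hs : s ≠ 0)
    (h0 : ∀ x ∈ s, 0 ≤ f x) (h : ∀ x ∈ s, f x < g x) :
    (s.map f).prod < (s.map g).prod := by
  induction s using Multiset.induction with
  | empty => exact absurd rfl hs
  | cons a t ih =>
    simp only [Multiset.map_cons, Multiset.prod_cons]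
    have hf0 := fun x hx => h0 x (Multiset.mem_cons_of_mem hx)
    have hg0 : ∀ x ∈ t, 0 < g x := fun x hx =>
      lt_of_le_of_lt (hf0 x hx) (h x (Multiset.mem_cons_of_mem hx))
    calc f a * (t.map f).prod
        ≤ f a * (t.map g).prod := by
          refine mul_le_mul_of_nonneg_left ?_ (h0 a (Multiset.mem_cons_self a t))
          exact prod_map_le hf0 (fun x hx => le_of_lt (h x (Multiset.mem_cons_of_mem hx)))
      _ < g a * (t.map g).prod := by
          refine mul_lt_mul_of_pos_right (h a (Multiset.mem_cons_self a t)) ?_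
          exact prod_map_pos hg0

theorem normSq_blaschke (v ζ : ℂ) :
    Complex.normSq (1 - conj v * ζ) - Complex.normSq (v - ζ)
      = (Complex.normSq v - 1) * (Complex.normSq ζ - 1) := by
  simp only [Complex.normSq_apply, Complex.sub_re, Complex.sub_im, Complex.one_re,
    Complex.one_im, Complex.mul_re, Complex.mul_im, Complex.conj_re, Complex.conj_im]
  ring

theorem abs_sub_le_abs_one_sub {v ζ : ℂ} (hv : 1 ≤ ‖v‖) (hζ : 1 ≤ ‖ζ‖) :
    ‖v - ζ‖ ≤ ‖1 - conj v * ζ‖ := by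
  rw [Complex.norm_def, Complex.norm_def]
  apply Real.sqrt_le_sqrt
  have h1 : 1 ≤ Complex.normSq v := by
    rw [← Complex.sq_norm]; nlinarith
  have h2 : 1 ≤ Complex.normSq ζ := by
    rw [← Complex.sq_norm]; nlinarith
  nlinarith [normSq_blaschke v ζ]

/-- dual version: roots inside, point outside -/

theorem abs_one_sub_le_abs_sub {v ζ : ℂ} (hv : 1 ≤ ‖v‖) (hζ : ‖ζ‖ ≤ 1) :
    ‖1 - conj v * ζ‖ ≤ ‖v - ζ‖ := by
  rw [Complex.norm_def, Complex.norm_def]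
  apply Real.sqrt_le_sqrt
  have h1 : 1 ≤ Complex.normSq v := by rw [← Complex.sq_norm]; nlinarith
  have h2 : Complex.normSq ζ ≤ 1 := by
    rw [← Complex.sq_norm]
    nlinarith [norm_nonneg ζ]
  nlinarith [normSq_blaschke v ζ]

theorem factor_lt {R : ℝ} (hR : 1 < R) {v ζ : ℂ} (hζ : ‖ζ‖ ≤ 1)
    (hv : 1 < ‖v‖) : ‖v - ζ‖ < ‖(R : ℂ) * v - ζ‖ := by
  apply lt_of_pow_lt_pow_left₀ 2 (norm_nonneg _)
  rw [Complex.sq_norm, Complex.sq_norm]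
  have h1 : 1 < Complex.normSq v := by rw [← Complex.sq_norm]; nlinarith [norm_nonneg v]
  have h2 : Complex.normSq ζ ≤ 1 := by
    rw [← Complex.sq_norm]; nlinarith [norm_nonneg ζ]
  simp only [Complex.normSq_apply, Complex.sub_re, Complex.sub_im, Complex.mul_re,
    Complex.mul_im, Complex.ofReal_re, Complex.ofReal_im]
  simp only [Complex.normSq_apply] at h1 h2
  nlinarith [sq_nonneg (v.re * ζ.im - v.im * ζ.re), sq_nonneg (v.re * ζ.re + v.im * ζ.im - 1),
    sq_nonneg (v.re * ζ.re + v.im * ζ.im + 1), mul_pos (sub_pos.mpr hR) (sub_pos.mpr hR)]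

theorem abs_sub_lt_abs_one_sub {v ζ : ℂ} (hv : 1 < ‖v‖) (hζ : 1 < ‖ζ‖) :
    ‖v - ζ‖ < ‖1 - conj v * ζ‖ := by
  rw [Complex.norm_def, Complex.norm_def]
  apply Real.sqrt_lt_sqrt (Complex.normSq_nonneg _)
  have h1 : 1 < Complex.normSq v := by rw [← Complex.sq_norm]; nlinarith [norm_nonneg v]
  have h2 : 1 < Complex.normSq ζ := by rw [← Complex.sq_norm]; nlinarith [norm_nonneg ζ]
  nlinarith [normSq_blaschke v ζ]

theorem log_deriv (c : ℂ) (s : Multiset ℂ) (w : ℂ) (hw : ∀ ζ ∈ s, w ≠ ζ) :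
    (derivative (C c * (s.map (fun ζ => X - C ζ)).prod)).eval w
      = (C c * (s.map (fun ζ => X - C ζ)).prod).eval w
          * (s.map (fun ζ => (w - ζ)⁻¹)).sum := by
  induction s using Multiset.induction with
  | empty => simp
  | cons a t ih =>
    have hwa : w - a ≠ 0 := sub_ne_zero.mpr (hw a (Multiset.mem_cons_self a t))
    have hwt : ∀ ζ ∈ t, w ≠ ζ := fun ζ hζ => hw ζ (Multiset.mem_cons_of_mem hζ)
    have key : C c * ((a ::ₘ t).map (fun ζ => X - C ζ)).prod
        = (X - C a) * (C c * (t.map (fun ζ => X - C ζ)).prod) := by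
      rw [Multiset.map_cons, Multiset.prod_cons]; ring
    rw [key, derivative_mul, eval_add, eval_mul, eval_mul, eval_mul, ih hwt]
    simp only [derivative_sub, derivative_X, derivative_C, sub_zero, eval_one, eval_sub,
      eval_X, eval_C, Multiset.map_cons, Multiset.sum_cons]
    field_simp
    simp only [eval_mul, eval_sub, eval_X, eval_C]
    ring

theorem abs_sum_le_card (s : Multiset ℂ) (F : ℂ → ℂ) (h : ∀ x ∈ s, ‖F x‖ ≤ 1) :
    ‖(s.map F).sum‖ ≤ s.card := by
  induction s using Multiset.induction with
  | empty => simp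
  | cons a t ih =>
    simp only [Multiset.map_cons, Multiset.sum_cons, Multiset.card_cons]
    calc ‖F a + (t.map F).sum‖
        ≤ ‖F a‖ + ‖(t.map F).sum‖ := norm_add_le _ _
      _ ≤ 1 + t.card := add_le_add (h a (Multiset.mem_cons_self a t))
          (ih fun x hx => h x (Multiset.mem_cons_of_mem hx))
      _ = (t.card + 1 : ℕ) := by push_cast; ring

theorem sum_map_sub' (s : Multiset ℂ) (f g : ℂ → ℂ) :
    (s.map (fun x => f x - g x)).sum = (s.map f).sum - (s.map g).sum := by
  induction s using Multiset.induction with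
  | empty => simp
  | cons a t ih =>
    simp only [Multiset.map_cons, Multiset.sum_cons, ih]; ring

theorem laguerre {p : ℂ[X]} {m : ℕ} (hdeg : p.natDegree = m) (hm : 1 ≤ m)
    (hroots : ∀ ζ ∈ p.roots, ‖ζ‖ ≤ 1) {α w : ℂ} (hα : 1 < ‖α‖)
    (hw : 1 < ‖w‖) :
    (m : ℂ) * p.eval w + (α - w) * (derivative p).eval w ≠ 0 := by
  have hm' : (m : ℂ) ≠ 0 := Nat.cast_ne_zero.mpr (by omega)
  have hp : p ≠ 0 := by
    intro h; rw [h] at hdeg; simp at hdeg; omega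
  have hwroot : ∀ ζ ∈ p.roots, w ≠ ζ := by
    intro ζ hζ he; subst he; exact absurd (hroots _ hζ) (not_le.mpr hw)
  have hpw : p.eval w ≠ 0 := by
    intro h
    exact absurd (hroots w (mem_roots'.mpr ⟨hp, h⟩)) (not_le.mpr hw)
  intro h
  rcases eq_or_ne w α with rfl | hwα
  · rw [sub_self, zero_mul, add_zero, mul_eq_zero] at h
    tauto
  · have hwα' : w - α ≠ 0 := sub_ne_zero.mpr hwα
    have hfact := (IsAlgClosed.splits p).eq_prod_roots
    set S : ℂ := (p.roots.map (fun ζ => (w - ζ)⁻¹)).sum with hS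
    have hderiv : (derivative p).eval w = p.eval w * S := by
      conv_lhs => rw [hfact]
      conv_rhs => rw [hfact]
      exact log_deriv _ _ _ hwroot
    have h2 : (m : ℂ) + (α - w) * S = 0 := by
      apply mul_left_cancel₀ hpw
      rw [hderiv] at h
      linear_combination h
    have hSeq : S * (w - α) = m := by linear_combination -h2
    -- the geometric bound
    set c₀ : ℝ := Complex.normSq w - 1 with hc₀
    have hc₀pos : 0 < c₀ := by
      have : 1 < Complex.normSq w := by rw [← Complex.sq_norm]; nlinarith [norm_nonneg w]
      simpa [hc₀] using this
    have hc : (c₀ : ℂ) = w * conj w - 1 := by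
      rw [hc₀]; push_cast [Complex.mul_conj]; ring
    have perRoot : ∀ ζ ∈ p.roots, ‖(w - ζ)⁻¹ * (c₀ : ℂ) - conj w‖ ≤ 1 := by
      intro ζ hζ
      have hwζ : w - ζ ≠ 0 := sub_ne_zero.mpr (hwroot ζ hζ)
      have e : (w - ζ)⁻¹ * (c₀ : ℂ) - conj w = (conj w * ζ - 1) * (w - ζ)⁻¹ := by
        field_simp
        linear_combination hc
      rw [e, norm_mul, norm_inv, ← div_eq_mul_inv, div_le_one ((norm_pos_iff.mpr hwζ))]
      calc ‖conj w * ζ - 1‖ = ‖1 - conj w * ζ‖ := norm_sub_rev _ _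
        _ ≤ ‖w - ζ‖ := abs_one_sub_le_abs_sub (le_of_lt hw) (hroots ζ hζ)
    have sum_eq : (p.roots.map (fun ζ => (w - ζ)⁻¹ * (c₀ : ℂ) - conj w)).sum
        = S * c₀ - m * conj w := by
      rw [sum_map_sub' _ _ (fun _ => conj w), Multiset.sum_map_mul_right]
      congr 1
      rw [Multiset.map_const', Multiset.sum_replicate, card_roots_complex, hdeg]
      simp [nsmul_eq_mul]
    have hbound : ‖S * c₀ - m * conj w‖ ≤ m := by
      rw [← sum_eq]
      have := abs_sum_le_card p.roots _ perRoot
      rwa [card_roots_complex, hdeg] at this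
    -- the contradiction
    have key2 : (S * c₀ - m * conj w) * (w - α) = m * (conj w * α - 1) := by
      linear_combination (c₀ : ℂ) * hSeq + (m : ℂ) * hc
    have hstrict : ‖w - α‖ < ‖conj w * α - 1‖ := by
      calc ‖w - α‖ < ‖1 - conj w * α‖ := abs_sub_lt_abs_one_sub hw hα
        _ = ‖conj w * α - 1‖ := (norm_sub_rev _ _).symm
    have habs : ‖S * c₀ - m * conj w‖ * ‖w - α‖
        = m * ‖conj w * α - 1‖ := by
      rw [← norm_mul, key2, norm_mul]; simp
    have hm1 : (1:ℝ) ≤ m := by exact_mod_cast hm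
    nlinarith [(norm_pos_iff.mpr hwα'), norm_nonneg (S * (c₀:ℂ) - m * conj w),
      mul_le_mul_of_nonneg_right hbound (le_of_lt ((norm_pos_iff.mpr hwα')))]

theorem coeff_comp_C_mul_X (p : ℂ[X]) (r : ℂ) (k : ℕ) :
    (p.comp (C r * X)).coeff k = r ^ k * p.coeff k := by
  induction p using Polynomial.induction_on' with
  | add f g hf hg => simp [add_comp, hf, hg, mul_add]
  | monomial i a =>
    rw [monomial_comp, mul_pow, ← C_pow, ← mul_assoc, ← C_mul]
    simp only [coeff_C_mul, coeff_X_pow, coeff_monomial]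
    rcases eq_or_ne i k with h | h
    · subst h; simp [mul_comm]
    · simp [h, Ne.symm h]

theorem coeff_Wp (R β : ℂ) (p : ℂ[X]) (k : ℕ) :
    (Wp R β p).coeff k = (R ^ k - β) * p.coeff k := by
  simp only [Wp, coeff_sub, coeff_comp_C_mul_X, coeff_C_mul]
  ring

theorem Rpow_sub_ne_zero {R : ℝ} (hR : 1 < R) {β : ℂ} (hβ : ‖β‖ ≤ 1)
    {k : ℕ} (hk : 1 ≤ k) : ((R : ℂ) ^ k - β) ≠ 0 := by
  intro h
  have h2 : (R : ℂ) ^ k = β := by linear_combination h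
  have h3 : ‖(R : ℂ) ^ k‖ = R ^ k := by
    rw [norm_pow, Complex.norm_real, Real.norm_eq_abs, abs_of_pos (by linarith)]
  have h4 : 1 < R ^ k := one_lt_pow₀ hR (by omega)
  rw [h2] at h3
  linarith [hβ, h3.symm.le]

theorem natDegree_Wp {p : ℂ[X]} {n : ℕ} (hdeg : p.natDegree = n) (hn : 1 ≤ n)
    {R : ℝ} (hR : 1 < R) {β : ℂ} (hβ : ‖β‖ ≤ 1) :
    (Wp (R : ℂ) β p).natDegree = n := by
  have hle : (Wp (R : ℂ) β p).natDegree ≤ n := by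
    rw [natDegree_le_iff_coeff_eq_zero]
    intro N hN
    rw [coeff_Wp, coeff_eq_zero_of_natDegree_lt (by omega : p.natDegree < N), mul_zero]
  have hne : (Wp (R : ℂ) β p).coeff n ≠ 0 := by
    rw [coeff_Wp]
    exact mul_ne_zero (Rpow_sub_ne_zero hR hβ hn)
      (by rw [← hdeg]; exact coeff_ne_zero_of_eq_degree (degree_eq_natDegree (fun h => by
        rw [h] at hdeg; simp at hdeg; omega)) )
  exact le_antisymm hle (le_natDegree_of_ne_zero hne)

theorem abs_eval_lt_abs_eval_R {p : ℂ[X]} {n : ℕ} (hdeg : p.natDegree = n) (hn : 1 ≤ n)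
    (hroots : ∀ ζ ∈ p.roots, ‖ζ‖ ≤ 1) {R : ℝ} (hR : 1 < R) {v : ℂ}
    (hv : 1 < ‖v‖) :
    ‖p.eval v‖ < ‖p.eval ((R : ℂ) * v)‖ := by
  have hp : p ≠ 0 := fun h => by rw [h] at hdeg; simp at hdeg; omega
  have hcard : p.roots ≠ 0 := by
    intro h
    have := card_roots_complex (p := p)
    rw [h] at this; simp at this; omega
  rw [eval_eq_prod_roots v, eval_eq_prod_roots ((R : ℂ) * v), norm_mul, norm_mul,
    abs_multiset_prod, abs_multiset_prod, Multiset.map_map, Multiset.map_map]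
  apply mul_lt_mul_of_pos_left
  · exact prod_map_lt hcard (fun x _ => norm_nonneg _)
      (fun x hx => factor_lt hR (hroots x hx) hv)
  · exact (norm_pos_iff.mpr (leadingCoeff_ne_zero.mpr hp))

theorem Wp_eval_ne_zero {p : ℂ[X]} {n : ℕ} (hdeg : p.natDegree = n) (hn : 1 ≤ n)
    (hroots : ∀ ζ ∈ p.roots, ‖ζ‖ ≤ 1) {R : ℝ} (hR : 1 < R) {β : ℂ}
    (hβ : ‖β‖ ≤ 1) {v : ℂ} (hv : 1 < ‖v‖) :
    (Wp (R : ℂ) β p).eval v ≠ 0 := by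
  have hlt := abs_eval_lt_abs_eval_R hdeg hn hroots hR hv
  intro h
  simp only [Wp, eval_sub, eval_comp, eval_mul, eval_C, eval_X] at h
  have he : p.eval ((R : ℂ) * v) = β * p.eval v := by linear_combination h
  rw [he, norm_mul] at hlt
  nlinarith [norm_nonneg (p.eval v), norm_nonneg β]

theorem roots_Wp {p : ℂ[X]} {n : ℕ} (hdeg : p.natDegree = n) (hn : 1 ≤ n)
    (hroots : ∀ ζ ∈ p.roots, ‖ζ‖ ≤ 1) {R : ℝ} (hR : 1 < R) {β : ℂ}
    (hβ : ‖β‖ ≤ 1) :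
    ∀ ζ ∈ (Wp (R : ℂ) β p).roots, ‖ζ‖ ≤ 1 := by
  intro ζ hζ
  by_contra hgt
  exact Wp_eval_ne_zero hdeg hn hroots hR hβ (not_le.mp hgt)
    ((mem_roots'.mp hζ).2)

theorem Tp_eval_ne_zero {p : ℂ[X]} {n : ℕ} (hdeg : p.natDegree = n) (hn : 1 ≤ n)
    (hroots : ∀ ζ ∈ p.roots, ‖ζ‖ ≤ 1) {R : ℝ} (hR : 1 < R) {β a z : ℂ}
    (hβ : ‖β‖ ≤ 1) (ha0 : a ≠ 0) (ha : ‖a‖ < 1)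
    (hz : 1 < ‖z‖) :
    (Tp (R : ℂ) β a n p).eval z ≠ 0 := by
  set W := Wp (R : ℂ) β p with hW
  have hWdeg : W.natDegree = n := natDegree_Wp hdeg hn hR hβ
  have hWroots := roots_Wp hdeg hn hroots hR hβ
  have hα : 1 < ‖-a⁻¹‖ := by
    rw [norm_neg, norm_inv]
    rw [lt_inv_comm₀] <;> simp [(norm_pos_iff.mpr ha0), ha]
  have hlag := laguerre hWdeg hn hWroots hα hz
  have key : (Tp (R : ℂ) β a n p).eval z
      = -a * ((n : ℂ) * W.eval z + (-a⁻¹ - z) * (derivative W).eval z) := by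
    simp only [Tp, ← hW, eval_sub, eval_mul, eval_add, eval_one, eval_C, eval_X]
    field_simp
    ring
  rw [key]
  exact mul_ne_zero (neg_ne_zero.mpr ha0) hlag

theorem roots_ge_one {p : ℂ[X]} (hz0 : ∀ w : ℂ, ‖w‖ < 1 → p.eval w ≠ 0) :
    ∀ ζ ∈ p.roots, 1 ≤ ‖ζ‖ := by
  intro ζ hζ
  by_contra h
  exact hz0 ζ (not_le.mp h) (mem_roots'.mp hζ).2

theorem one_le_prod_abs {s : Multiset ℂ} (h : ∀ x ∈ s, 1 ≤ ‖x‖) :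
    1 ≤ (s.map (‖·‖)).prod := by
  induction s using Multiset.induction with
  | empty => simp
  | cons a t ih =>
    simp only [Multiset.map_cons, Multiset.prod_cons]
    have h1 := h a (Multiset.mem_cons_self a t)
    have h2 := ih fun x hx => h x (Multiset.mem_cons_of_mem hx)
    nlinarith

theorem abs_coeff_zero_ge {p : ℂ[X]} {n : ℕ} (hdeg : p.natDegree = n)
    (hroots : ∀ ζ ∈ p.roots, 1 ≤ ‖ζ‖) :
    ‖p.coeff n‖ ≤ ‖p.coeff 0‖ := by
  rcases eq_or_ne p 0 with rfl | hp
  · simp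
  have h0 : p.coeff 0 = p.eval 0 := (coeff_zero_eq_eval_zero p).symm ▸ rfl
  have e : p.eval 0 = p.leadingCoeff * ((p.roots.map (fun ζ => (0:ℂ) - ζ)).prod) :=
    eval_eq_prod_roots 0
  have habs : ‖p.eval 0‖
      = ‖p.leadingCoeff‖ * ((p.roots.map (fun ζ => ‖(0:ℂ) - ζ‖)).prod) := by
    rw [e, norm_mul, abs_multiset_prod, Multiset.map_map]; rfl
  have hge : 1 ≤ (p.roots.map (fun ζ => ‖(0:ℂ) - ζ‖)).prod := by
    have he2 : (p.roots.map (fun ζ => ‖(0:ℂ) - ζ‖)) = p.roots.map (‖·‖) :=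
      Multiset.map_congr rfl (fun x _ => by simp)
    rw [he2]
    exact one_le_prod_abs hroots
  have hlead : p.coeff n = p.leadingCoeff := by rw [← hdeg]; rfl
  rw [hlead, coeff_zero_eq_eval_zero, habs]
  nlinarith [norm_nonneg p.leadingCoeff]

theorem natDegree_Qop {p : ℂ[X]} {n : ℕ} (hdeg : p.natDegree = n)
    (h0 : p.coeff 0 ≠ 0) : (Qop n p).natDegree = n := by
  refine le_antisymm (natDegree_Qop_le n p) (le_natDegree_of_ne_zero ?_)
  rw [coeff_Qop n p le_rfl, Nat.sub_self]
  simpa using h0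

theorem Qop_eval_ne_zero {p : ℂ[X]} {n : ℕ} (hdeg : p.natDegree = n)
    (hz0 : ∀ w : ℂ, ‖w‖ < 1 → p.eval w ≠ 0) {v : ℂ} (hv : 1 < ‖v‖) :
    (Qop n p).eval v ≠ 0 := by
  have hv0 : v ≠ 0 := by
    intro h; rw [h] at hv; simp at hv; linarith
  rw [eval_Qop n p hdeg.le v hv0]
  apply mul_ne_zero (pow_ne_zero _ hv0)
  have hlt : ‖(conj v)⁻¹‖ < 1 := by
    rw [norm_inv, Complex.norm_conj, inv_lt_one_iff₀]
    right; exact hv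
  have hne := hz0 _ hlt
  simpa using hne

theorem roots_Qop_le_one {p : ℂ[X]} {n : ℕ} (hdeg : p.natDegree = n)
    (hz0 : ∀ w : ℂ, ‖w‖ < 1 → p.eval w ≠ 0) :
    ∀ ζ ∈ (Qop n p).roots, ‖ζ‖ ≤ 1 := by
  intro ζ hζ
  by_contra h
  exact Qop_eval_ne_zero hdeg hz0 (not_le.mp h) (mem_roots'.mp hζ).2

theorem abs_eval_le_abs_Qop {p : ℂ[X]} {n : ℕ} (hdeg : p.natDegree = n)
    (hroots : ∀ ζ ∈ p.roots, 1 ≤ ‖ζ‖) {v : ℂ} (hv : 1 ≤ ‖v‖) :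
    ‖p.eval v‖ ≤ ‖(Qop n p).eval v‖ := by
  have hv0 : v ≠ 0 := by
    intro h; rw [h] at hv; simp at hv; linarith
  have hcv0 : conj v ≠ 0 := by simpa using hv0
  rw [eval_Qop n p hdeg.le v hv0, norm_mul, norm_pow, Complex.norm_conj]
  rw [eval_eq_prod_roots v, eval_eq_prod_roots ((conj v)⁻¹), norm_mul, norm_mul,
    abs_multiset_prod, abs_multiset_prod, Multiset.map_map, Multiset.map_map]
  rw [mul_comm (‖v‖ ^ n), mul_assoc]
  apply mul_le_mul_of_nonneg_left _ (norm_nonneg _)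
  have hn : n = p.roots.card := by rw [card_roots_complex, hdeg]
  rw [hn, ← Multiset.prod_replicate, ← Multiset.map_const']
  rw [← Multiset.prod_map_mul]
  refine prod_map_le (fun x _ => norm_nonneg _) (fun ζ hζ => ?_)
  simp only [Function.comp_apply]
  rw [mul_comm]
  calc ‖v - ζ‖ ≤ ‖1 - conj v * ζ‖ :=
        abs_sub_le_abs_one_sub hv (hroots ζ hζ)
    _ = ‖v‖ * ‖(conj v)⁻¹ - ζ‖ := by
        rw [← Complex.norm_conj v, ← norm_mul]
        congr 1
        rw [mul_sub, mul_inv_cancel₀ hcv0]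

theorem Tp_sub_C_mul (R β a : ℂ) (n : ℕ) (p q : ℂ[X]) (lam : ℂ) :
    Tp R β a n (p - C lam * q) = Tp R β a n p - C lam * Tp R β a n q := by
  simp only [Tp, Wp, sub_comp, mul_comp, C_comp, derivative_sub, derivative_mul,
    derivative_C, zero_mul, zero_add]
  ring

theorem ML1 {p : ℂ[X]} {n : ℕ} (hdeg : p.natDegree = n) (hn : 1 ≤ n)
    (hz0 : ∀ w : ℂ, ‖w‖ < 1 → p.eval w ≠ 0) {R : ℝ} (hR : 1 < R) {β a z : ℂ}
    (hβ : ‖β‖ ≤ 1) (ha0 : a ≠ 0) (ha : ‖a‖ < 1)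
    (hz : 1 < ‖z‖)
    (hTq : (Tp (R : ℂ) β a n (Qop n p)).eval z ≠ 0) :
    ‖(Tp (R : ℂ) β a n p).eval z‖
      ≤ ‖(Tp (R : ℂ) β a n (Qop n p)).eval z‖ := by
  by_contra hcon
  push_neg at hcon
  set q := Qop n p with hq
  set lam := (Tp (R : ℂ) β a n p).eval z / (Tp (R : ℂ) β a n q).eval z with hlam
  have hTqpos : 0 < ‖(Tp (R : ℂ) β a n q).eval z‖ := (norm_pos_iff.mpr hTq)
  have hlam1 : 1 < ‖lam‖ := by
    rw [hlam, norm_div, one_lt_div hTqpos]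
    exact hcon
  set G := p - C lam * q with hG
  have hp0 : p.coeff 0 ≠ 0 := by
    rw [coeff_zero_eq_eval_zero]; exact hz0 0 (by simp)
  have hroots := roots_ge_one hz0
  have hqn : q.coeff n = conj (p.coeff 0) := by
    rw [hq, coeff_Qop n p le_rfl, Nat.sub_self]
  have hGn : G.coeff n ≠ 0 := by
    rw [hG, coeff_sub, coeff_C_mul, hqn]
    intro h
    have he : p.coeff n = lam * conj (p.coeff 0) := by linear_combination h
    have he2 := congrArg (‖·‖) he
    rw [norm_mul, Complex.norm_conj] at he2
    have hle := abs_coeff_zero_ge hdeg hroots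
    nlinarith [(norm_pos_iff.mpr hp0)]
  have hGdeg : G.natDegree = n := by
    refine le_antisymm ?_ (le_natDegree_of_ne_zero hGn)
    refine le_trans (natDegree_sub_le _ _) (max_le (le_of_eq hdeg) ?_)
    exact le_trans (natDegree_C_mul_le _ _) (natDegree_Qop_le n p)
  have hGroots : ∀ ζ ∈ G.roots, ‖ζ‖ ≤ 1 := by
    intro ζ hζ
    by_contra hgt
    have hv : 1 < ‖ζ‖ := not_le.mp hgt
    have h1 : ‖p.eval ζ‖ ≤ ‖q.eval ζ‖ :=
      abs_eval_le_abs_Qop hdeg hroots (le_of_lt hv)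
    have h2 : q.eval ζ ≠ 0 := Qop_eval_ne_zero hdeg hz0 hv
    have h3 : G.eval ζ = 0 := (mem_roots'.mp hζ).2
    rw [hG, eval_sub, eval_mul, eval_C, sub_eq_zero] at h3
    have he2 := congrArg (‖·‖) h3
    rw [norm_mul] at he2
    nlinarith [(norm_pos_iff.mpr h2)]
  have hTG := Tp_eval_ne_zero hGdeg hn hGroots hR hβ ha0 ha hz
  apply hTG
  rw [hG, Tp_sub_C_mul, eval_sub, eval_mul, eval_C, hlam, div_mul_cancel₀ _ hTq, sub_self]

theorem Tp_Qop_ne_zero {p : ℂ[X]} {n : ℕ} (hdeg : p.natDegree = n) (hn : 1 ≤ n)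
    (hz0 : ∀ w : ℂ, ‖w‖ < 1 → p.eval w ≠ 0) {R : ℝ} (hR : 1 < R) {β a : ℂ}
    (hβ : ‖β‖ ≤ 1) (ha0 : a ≠ 0) (ha : ‖a‖ < 1) :
    Tp (R : ℂ) β a n (Qop n p) ≠ 0 := by
  intro h
  set q := Qop n p with hq
  have hp0 : p.coeff 0 ≠ 0 := by
    rw [coeff_zero_eq_eval_zero]; exact hz0 0 (by simp)
  have hqdeg : q.natDegree = n := natDegree_Qop hdeg hp0
  have hqroots := roots_Qop_le_one hdeg hz0
  have hα : 1 < ‖-a⁻¹‖ := by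
    rw [norm_neg, norm_inv]
    rw [lt_inv_comm₀] <;> simp [(norm_pos_iff.mpr ha0), ha]
  have hW := Wp_eval_ne_zero hqdeg hn hqroots hR hβ hα
  apply hW
  have h2 : (Tp (R : ℂ) β a n q).eval (-a⁻¹) = 0 := by rw [h]; simp
  simp only [Tp, eval_sub, eval_mul, eval_add, eval_one, eval_C, eval_X] at h2
  have h3 : (1 + a * (-a⁻¹)) = 0 := by field_simp; norm_num
  rw [h3, zero_mul, zero_sub, neg_eq_zero, mul_eq_zero] at h2
  rcases h2 with h2 | h2
  · exfalso
    rw [mul_eq_zero] at h2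
    rcases h2 with h2 | h2
    · exact (Nat.cast_ne_zero.mpr (by omega : n ≠ 0)) h2
    · exact ha0 h2
  · exact h2

theorem maxmod {f : ℂ[X]} {C : ℝ} (h : ∀ w : ℂ, ‖w‖ = 1 → ‖f.eval w‖ ≤ C) :
    ∀ w : ℂ, ‖w‖ ≤ 1 → ‖f.eval w‖ ≤ C := by
  intro w hw
  have hd : DiffContOnCl ℂ (fun z => f.eval z) (ball (0:ℂ) 1) :=
    (f.differentiable).diffContOnCl
  have hfr : ∀ z ∈ frontier (ball (0:ℂ) 1), ‖f.eval z‖ ≤ C := by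
    rw [frontier_ball (0:ℂ) one_ne_zero]
    intro z hz
    rw [mem_sphere_zero_iff_norm] at hz
    exact h z hz
  have hcl : w ∈ closure (ball (0:ℂ) 1) := by
    rw [closure_ball (0:ℂ) one_ne_zero, mem_closedBall_zero_iff]
    exact hw
  exact Complex.norm_le_of_forall_mem_frontier_norm_le isBounded_ball hd hfr hcl

theorem le_maxSphere (P : ℂ[X]) {w : ℂ} (hw : ‖w‖ = 1) :
    ‖P.eval w‖ ≤ maxSphere P := by
  apply le_csSup
  · exact IsCompact.bddAbove_image (isCompact_sphere 0 1)
      ((continuous_norm.comp P.continuous).continuousOn)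
  · exact ⟨w, by rwa [mem_sphere_zero_iff_norm], rfl⟩

theorem maxSphere_closed (P : ℂ[X]) : ∀ w : ℂ, ‖w‖ ≤ 1 →
    ‖P.eval w‖ ≤ maxSphere P :=
  maxmod (fun w hw => le_maxSphere P hw)

theorem maxSphere_pos {P : ℂ[X]} (hP0 : P.eval 0 ≠ 0) : 0 < maxSphere P :=
  lt_of_lt_of_le ((norm_pos_iff.mpr hP0)) (maxSphere_closed P 0 (by simp))

theorem Qop_le_maxSphere {P : ℂ[X]} {n : ℕ} (hdeg : P.natDegree = n) :
    ∀ w : ℂ, ‖w‖ ≤ 1 → ‖(Qop n P).eval w‖ ≤ maxSphere P := by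
  apply maxmod
  intro w hw
  have hw0 : w ≠ 0 := by
    intro h; rw [h] at hw; simp at hw
  rw [eval_Qop n P hdeg.le w hw0, norm_mul, norm_pow, hw, one_pow, one_mul, Complex.norm_conj]
  apply le_maxSphere
  rw [norm_inv, Complex.norm_conj, hw, inv_one]

theorem eval_P_eq {P : ℂ[X]} {n : ℕ} (hdeg : P.natDegree = n) {v : ℂ} (hv : v ≠ 0) :
    P.eval v = v ^ n * conj ((Qop n P).eval ((conj v)⁻¹)) := by
  conv_lhs => rw [← Qop_Qop n P hdeg.le]
  exact eval_Qop n (Qop n P) (natDegree_Qop_le n P) v hv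

theorem growth {P : ℂ[X]} {n : ℕ} (hdeg : P.natDegree = n) {v : ℂ}
    (hv : 1 ≤ ‖v‖) :
    ‖P.eval v‖ ≤ ‖v‖ ^ n * maxSphere P := by
  have hv0 : v ≠ 0 := by
    intro h; rw [h] at hv; simp at hv; linarith
  rw [eval_P_eq hdeg hv0, norm_mul, norm_pow, Complex.norm_conj]
  apply mul_le_mul_of_nonneg_left _ (pow_nonneg (norm_nonneg v) n)
  apply Qop_le_maxSphere hdeg
  rw [norm_inv, Complex.norm_conj]
  exact inv_le_one_of_one_le₀ hv

theorem abs_leadingCoeff_le {P : ℂ[X]} {n : ℕ} (hdeg : P.natDegree = n) :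
    ‖P.coeff n‖ ≤ maxSphere P := by
  have h1 : (Qop n P).coeff 0 = conj (P.coeff n) := by
    rw [coeff_Qop n P (Nat.zero_le n), Nat.sub_zero]
  have h2 := Qop_le_maxSphere hdeg 0 (by simp)
  rw [← coeff_zero_eq_eval_zero, h1, Complex.norm_conj] at h2
  exact h2

theorem Tval_Xpow {R β a z : ℂ} {n : ℕ} (hn : 1 ≤ n) :
    (Tp R β a n (X ^ n : ℂ[X])).eval z = n * (R ^ n - β) * z ^ (n - 1) := by
  obtain ⟨m, rfl⟩ : ∃ m, n = m + 1 := ⟨n - 1, by omega⟩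
  rw [eval_Tp]
  simp only [derivative_X_pow, eval_mul, eval_pow, eval_X, eval_C, eval_natCast,
    Nat.add_sub_cancel]
  push_cast
  ring

theorem Tval_one {R β a z : ℂ} {n : ℕ} :
    (Tp R β a n (1 : ℂ[X])).eval z = -((n : ℂ) * a * (1 - β)) := by
  rw [eval_Tp]
  simp

theorem B_bound {P : ℂ[X]} {n : ℕ} (hdeg : P.natDegree = n) (hn : 1 ≤ n)
    (hz0 : ∀ w : ℂ, ‖w‖ < 1 → P.eval w ≠ 0) {R : ℝ} (hR : 1 < R) {β a z : ℂ}
    (hβ : ‖β‖ ≤ 1) (ha0 : a ≠ 0) (ha : ‖a‖ < 1)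
    (hz : 1 < ‖z‖) :
    ‖(Tp (R : ℂ) β a n P).eval z‖
      ≤ maxSphere P * ‖(Tp (R : ℂ) β a n (X ^ n : ℂ[X])).eval z‖ := by
  set M := maxSphere P with hM
  have hMpos : 0 < M := maxSphere_pos (hz0 0 (by simp))
  set TX := (Tp (R : ℂ) β a n (X ^ n : ℂ[X])).eval z with hTX
  have hz0' : z ≠ 0 := by
    intro h; rw [h] at hz; simp at hz; linarith
  have hTXne : TX ≠ 0 := by
    rw [hTX, Tval_Xpow hn]
    exact mul_ne_zero (mul_ne_zero (Nat.cast_ne_zero.mpr (by omega)) (Rpow_sub_ne_zero hR hβ hn))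
      (pow_ne_zero _ hz0')
  have hTXpos : 0 < ‖TX‖ := (norm_pos_iff.mpr hTXne)
  by_contra hcon
  push_neg at hcon
  set lam := (Tp (R : ℂ) β a n P).eval z / ((M : ℂ) * TX) with hlam
  have hMTXne : (M : ℂ) * TX ≠ 0 :=
    mul_ne_zero (by exact_mod_cast ne_of_gt hMpos) hTXne
  have hlam1 : 1 < ‖lam‖ := by
    rw [hlam, norm_div, norm_mul, Complex.norm_real, Real.norm_eq_abs, abs_of_pos hMpos, one_lt_div
      (by positivity)]
    exact hcon
  set H := P - C (lam * M) * X ^ n with hH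
  have hHn : H.coeff n ≠ 0 := by
    rw [hH, coeff_sub, coeff_C_mul, coeff_X_pow, if_pos rfl, mul_one]
    intro h
    have he : P.coeff n = lam * M := by linear_combination h
    have he2 := congrArg (‖·‖) he
    rw [norm_mul, Complex.norm_real, Real.norm_eq_abs, abs_of_pos hMpos] at he2
    have hle := abs_leadingCoeff_le hdeg
    nlinarith
  have hHdeg : H.natDegree = n := by
    refine le_antisymm ?_ (le_natDegree_of_ne_zero hHn)
    refine le_trans (natDegree_sub_le _ _) (max_le (le_of_eq hdeg) ?_)
    exact le_trans (natDegree_C_mul_le _ _) (le_of_eq (natDegree_X_pow n))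
  have hHroots : ∀ ζ ∈ H.roots, ‖ζ‖ ≤ 1 := by
    intro ζ hζ
    by_contra hgt
    have hv : 1 < ‖ζ‖ := not_le.mp hgt
    have h3 : H.eval ζ = 0 := (mem_roots'.mp hζ).2
    rw [hH, eval_sub, eval_mul, eval_C, eval_pow, eval_X, sub_eq_zero] at h3
    have he2 := congrArg (‖·‖) h3
    rw [norm_mul, norm_mul, norm_pow, Complex.norm_real, Real.norm_eq_abs, abs_of_pos hMpos] at he2
    have hgr := growth hdeg (le_of_lt hv)
    have hpow : (0:ℝ) < ‖ζ‖ ^ n := pow_pos (by linarith) n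
    rw [← hM] at hgr
    nlinarith [mul_pos (mul_pos (sub_pos.mpr hlam1) hMpos) hpow]
  have hTH := Tp_eval_ne_zero hHdeg hn hHroots hR hβ ha0 ha hz
  apply hTH
  rw [hH, Tp_sub_C_mul, eval_sub, eval_mul, eval_C, ← hTX, hlam, mul_assoc,
    div_mul_cancel₀ _ hMTXne, sub_self]

theorem core {P : ℂ[X]} {n : ℕ} (hdeg : P.natDegree = n) (hn : 1 ≤ n)
    (hz0 : ∀ w : ℂ, ‖w‖ < 1 → P.eval w ≠ 0) {R : ℝ} (hR : 1 < R) {β a z : ℂ}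
    (hβ : ‖β‖ ≤ 1) (ha0 : a ≠ 0) (ha : ‖a‖ < 1)
    (hz : 1 < ‖z‖)
    (hTq : (Tp (R : ℂ) β a n (Qop n P)).eval z ≠ 0) :
    2 * ‖(Tp (R : ℂ) β a n P).eval z‖
      ≤ maxSphere P * ((n : ℝ) * ‖(R : ℂ) ^ n - β‖ * ‖z‖ ^ (n - 1)
          + (n : ℝ) * ‖1 - β‖ * ‖a‖) := by
  set M := maxSphere P with hM
  have hMpos : 0 < M := maxSphere_pos (hz0 0 (by simp))
  set q := Qop n P with hq
  set u := (Tp (R : ℂ) β a n P).eval z with hu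
  set Tqv := (Tp (R : ℂ) β a n q).eval z with hTqv
  set TXv := (Tp (R : ℂ) β a n (X ^ n : ℂ[X])).eval z with hTXv
  set T1v := (Tp (R : ℂ) β a n (1 : ℂ[X])).eval z with hT1v
  have hz0' : z ≠ 0 := by intro h; rw [h] at hz; simp at hz; linarith
  have hTXne : TXv ≠ 0 := by
    rw [hTXv, Tval_Xpow hn]
    exact mul_ne_zero (mul_ne_zero (Nat.cast_ne_zero.mpr (by omega))
      (Rpow_sub_ne_zero hR hβ hn)) (pow_ne_zero _ hz0')
  have hTXpos : 0 < ‖TXv‖ := (norm_pos_iff.mpr hTXne)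
  have hB : ‖u‖ ≤ M * ‖TXv‖ := B_bound hdeg hn hz0 hR hβ ha0 ha hz
  have hML : ‖u‖ ≤ ‖Tqv‖ := ML1 hdeg hn hz0 hR hβ ha0 ha hz hTq
  have hp0 : P.coeff 0 ≠ 0 := by
    rw [coeff_zero_eq_eval_zero]; exact hz0 0 (by simp)
  -- the star inequality for every r > 1
  have star : ∀ r : ℝ, 1 < r →
      ‖Tqv‖ - r * M * ‖T1v‖
        ≤ r * M * ‖TXv‖ - ‖u‖ := by
    intro r hr
    set v : ℂ := if u = 0 then 1 else u / (‖u‖ : ℂ) with hv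
    have hv1 : ‖v‖ = 1 := by
      rw [hv]
      split_ifs with h
      · simp
      · rw [norm_div, Complex.norm_real, Real.norm_eq_abs, abs_of_pos ((norm_pos_iff.mpr h)),
          div_self (ne_of_gt ((norm_pos_iff.mpr h)))]
    have huv : u = (‖u‖ : ℂ) * v := by
      rw [hv]
      split_ifs with h
      · rw [h]; simp
      · rw [mul_div_assoc']
        rw [mul_comm, mul_div_assoc, div_self (by
          simpa using (ne_of_gt ((norm_pos_iff.mpr h))) : (‖u‖ : ℂ) ≠ 0), mul_one]
    set lam : ℂ := r * v * (‖TXv‖ : ℂ) * TXv⁻¹ with hlamdef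
    have hlamabs : ‖lam‖ = r := by
      rw [hlamdef, norm_mul, norm_mul, norm_mul, hv1, Complex.norm_real, Real.norm_eq_abs, Complex.norm_real, Real.norm_eq_abs,
        norm_inv, abs_of_pos (by linarith : (0:ℝ) < r), abs_of_pos hTXpos]
      field_simp
    set μ : ℂ := conj lam * (M : ℂ) with hμ
    have hμabs : ‖μ‖ = r * M := by
      rw [hμ, norm_mul, Complex.norm_conj, hlamabs, Complex.norm_real, Real.norm_eq_abs, abs_of_pos hMpos]
    set g := q - C μ with hg
    have hg0 : ∀ w : ℂ, ‖w‖ < 1 → g.eval w ≠ 0 := by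
      intro w hw he
      rw [hg, eval_sub, eval_C, sub_eq_zero] at he
      have h1 : ‖q.eval w‖ ≤ M := Qop_le_maxSphere hdeg w (le_of_lt hw)
      rw [he, hμabs] at h1
      nlinarith
    have hgn : g.coeff n ≠ 0 := by
      rw [hg, coeff_sub, coeff_C, if_neg (by omega : ¬ n = 0), sub_zero, hq,
        coeff_Qop n P le_rfl, Nat.sub_self]
      simpa using hp0
    have hgdeg : g.natDegree = n := by
      refine le_antisymm ?_ (le_natDegree_of_ne_zero hgn)
      refine le_trans (natDegree_sub_le _ _) (max_le (natDegree_Qop_le n P) ?_)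
      simp
    have hQg : Qop n g = P - C (lam * (M : ℂ)) * X ^ n := by
      rw [hg, Qop_sub, hq, Qop_Qop n P hdeg.le, Qop_C, hμ]
      congr 2
      rw [map_mul, Complex.conj_conj, Complex.conj_ofReal]
    have hcancel : lam * (M : ℂ) * TXv = (r : ℂ) * (M : ℂ) * (‖TXv‖ : ℂ) * v := by
      rw [hlamdef]
      field_simp
    have hval : (Tp (R : ℂ) β a n (Qop n g)).eval z
        = ((‖u‖ : ℂ) - (r : ℂ) * (M : ℂ) * (‖TXv‖ : ℂ)) * v := by
      have hgg : Qop n g = P - C (lam * (M : ℂ)) * X ^ n := hQg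
      rw [hgg, Tp_sub_C_mul, eval_sub, eval_mul, eval_C, ← hTXv, ← hu, hcancel]
      conv_lhs => rw [huv]
      ring
    have habs : ‖(Tp (R : ℂ) β a n (Qop n g)).eval z‖
        = r * M * ‖TXv‖ - ‖u‖ := by
      rw [hval, norm_mul, hv1, mul_one]
      have hcast : ((‖u‖ : ℂ) - (r : ℂ) * (M : ℂ) * (‖TXv‖ : ℂ))
          = ((‖u‖ - r * M * ‖TXv‖ : ℝ) : ℂ) := by push_cast; ring
      rw [hcast, Complex.norm_real, Real.norm_eq_abs, abs_of_nonpos (by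
        nlinarith [mul_pos hMpos hTXpos, mul_pos (sub_pos.mpr hr) (mul_pos hMpos hTXpos)])]
      ring
    have hTQgne : (Tp (R : ℂ) β a n (Qop n g)).eval z ≠ 0 := by
      intro h
      rw [h, norm_zero] at habs
      nlinarith [mul_pos (sub_pos.mpr hr) (mul_pos hMpos hTXpos)]
    have hMLg := ML1 hgdeg hn hg0 hR hβ ha0 ha hz hTQgne
    rw [habs] at hMLg
    -- lower bound for |T g|
    have hgeq : g = q - C μ * 1 := by rw [hg, mul_one]
    have hTg : (Tp (R : ℂ) β a n g).eval z = Tqv - μ * T1v := by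
      rw [hgeq, Tp_sub_C_mul, eval_sub, eval_mul, eval_C, ← hTqv, ← hT1v]
    have hlow : ‖Tqv‖ - r * M * ‖T1v‖
        ≤ ‖(Tp (R : ℂ) β a n g).eval z‖ := by
      rw [hTg]
      calc ‖Tqv‖ - r * M * ‖T1v‖
          = ‖Tqv‖ - ‖μ * T1v‖ := by rw [norm_mul, hμabs]
        _ ≤ ‖Tqv - μ * T1v‖ := norm_sub_norm_le _ _
    linarith
  -- pass to the limit r → 1
  have hlimit : ‖Tqv‖ - M * ‖T1v‖
      ≤ M * ‖TXv‖ - ‖u‖ := by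
    have hseq : Filter.Tendsto (fun k : ℕ => 1 + 1 / ((k : ℝ) + 1)) Filter.atTop (nhds 1) := by
      have h2 := tendsto_one_div_add_atTop_nhds_zero_nat.const_add (1 : ℝ)
      simpa using h2
    have hf : Filter.Tendsto
        (fun k : ℕ => ‖Tqv‖ - (1 + 1 / ((k : ℝ) + 1)) * M * ‖T1v‖)
        Filter.atTop (nhds (‖Tqv‖ - 1 * M * ‖T1v‖)) :=
      tendsto_const_nhds.sub ((hseq.mul_const M).mul_const _)
    have hgt : Filter.Tendsto
        (fun k : ℕ => (1 + 1 / ((k : ℝ) + 1)) * M * ‖TXv‖ - ‖u‖)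
        Filter.atTop (nhds (1 * M * ‖TXv‖ - ‖u‖)) :=
      ((hseq.mul_const M).mul_const _).sub tendsto_const_nhds
    have hle := le_of_tendsto_of_tendsto' hf hgt (fun k => star _ (by
      have hk : (0:ℝ) < 1 / ((k : ℝ) + 1) := by positivity
      linarith))
    simpa using hle
  have habsTX : ‖TXv‖
      = (n : ℝ) * ‖(R : ℂ) ^ n - β‖ * ‖z‖ ^ (n - 1) := by
    rw [hTXv, Tval_Xpow hn, norm_mul, norm_mul, norm_pow, Complex.norm_natCast]
  have habsT1 : ‖T1v‖ = (n : ℝ) * ‖1 - β‖ * ‖a‖ := by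
    rw [hT1v, Tval_one, norm_neg, norm_mul, norm_mul, Complex.norm_natCast]
    ring
  rw [← habsTX, ← habsT1, mul_add]
  linarith

end Stmt17aux

open Stmt17aux

theorem stmt_17 (n : ℕ) (P : Polynomial ℂ) (hP : P.natDegree = n)
    (hz : ∀ z : ℂ, ‖z‖ < 1 → P.eval z ≠ 0)
    (β a : ℂ) (hβ : ‖β‖ ≤ 1) (ha : ‖a‖ ≤ 1)
    (R : ℝ) (hR : 1 < R) :
    ∀ z : ℂ, 1 ≤ ‖z‖ →
      ‖(1 + a * z) * (R * (derivative P).eval (R * z) - β * (derivative P).eval z) -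
          n * a * (P.eval (R * z) - β * P.eval z)‖ ≤
        (n * ‖(R : ℂ) ^ n - β‖ * ‖z‖ ^ (n - 1) +
          n * ‖1 - β‖ * ‖a‖) / 2 * maxSphere P := by
  intro z hz1
  rcases Nat.eq_zero_or_pos n with hn0 | hn
  · -- degree zero case
    subst hn0
    have hd : derivative P = 0 := by
      obtain ⟨c, hc⟩ := natDegree_eq_zero.mp hP
      rw [← hc]; exact derivative_C
    rw [hd]
    simp
  · -- main case
    have hz0' : z ≠ 0 := by
      intro h; rw [h] at hz1; simp at hz1; linarith
    set ε : ℕ → ℝ := fun k => (((k : ℝ) + 2))⁻¹ with hε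
    have hεpos : ∀ k, 0 < ε k := fun k => by positivity
    have hεlt : ∀ k, ε k < 1 := by
      intro k
      rw [hε]
      rw [inv_lt_one_iff₀]
      right; linarith [Nat.cast_nonneg (α := ℝ) k]
    have hεt : Filter.Tendsto ε Filter.atTop (nhds 0) := by
      apply Filter.Tendsto.inv_tendsto_atTop
      exact Filter.tendsto_atTop_add_const_right _ 2 tendsto_natCast_atTop_atTop
    obtain ⟨A, hA0, hAlt, hAtend⟩ : ∃ A : ℕ → ℂ, (∀ k, A k ≠ 0) ∧
        (∀ k, ‖A k‖ < 1) ∧ Filter.Tendsto A Filter.atTop (nhds a) := by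
      rcases eq_or_ne a 0 with rfl | ha0
      · refine ⟨fun k => ((ε k : ℝ) : ℂ), fun k => ?_, fun k => ?_, ?_⟩
        · simp only [ne_eq, Complex.ofReal_eq_zero]
          exact ne_of_gt (hεpos k)
        · rw [Complex.norm_real, Real.norm_eq_abs, abs_of_pos (hεpos k)]
          exact hεlt k
        · have := (Complex.continuous_ofReal.tendsto (0:ℝ)).comp hεt
          simpa [Function.comp_def] using this
      · refine ⟨fun k => ((1 - ε k : ℝ) : ℂ) * a, fun k => ?_, fun k => ?_, ?_⟩
        · exact mul_ne_zero (by
            simp only [ne_eq, Complex.ofReal_eq_zero]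
            intro h3
            nlinarith [hεlt k, hεpos k]) ha0
        · rw [norm_mul, Complex.norm_real, Real.norm_eq_abs, abs_of_pos (by nlinarith [hεlt k, hεpos k])]
          nlinarith [hεlt k, hεpos k, norm_nonneg a]
        · have h1 : Filter.Tendsto (fun k => ((1 - ε k : ℝ) : ℂ)) Filter.atTop
              (nhds ((1:ℝ):ℂ)) := by
            apply Filter.Tendsto.comp (Complex.continuous_ofReal.tendsto (1:ℝ))
            have h0 : Filter.Tendsto (fun k => (1 - ε k : ℝ)) Filter.atTop (nhds (1 - 0)) :=
              tendsto_const_nhds.sub hεt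
            simpa using h0
          have h2 := h1.mul_const a
          simpa using h2
    -- choose the z-sequence avoiding zeros of T[q]
    have hsel : ∀ k : ℕ, ∃ t : ℝ, 0 < t ∧ t < ε k ∧
        (Tp (R : ℂ) β (A k) n (Qop n P)).eval (((1 + t : ℝ) : ℂ) * z) ≠ 0 := by
      intro k
      have hTk : Tp (R : ℂ) β (A k) n (Qop n P) ≠ 0 :=
        Tp_Qop_ne_zero hP hn hz hR hβ (hA0 k) (hAlt k)
      have hfin : {w : ℂ | (Tp (R : ℂ) β (A k) n (Qop n P)).IsRoot w}.Finite :=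
        finite_setOf_isRoot hTk
      set m : ℝ → ℂ := fun t => ((1 + t : ℝ) : ℂ) * z with hm
      have hpre : (m ⁻¹' {w : ℂ | (Tp (R : ℂ) β (A k) n (Qop n P)).IsRoot w}).Finite := by
        apply Set.Finite.preimage _ hfin
        intro s _ t _ hst
        have h2 := mul_right_cancel₀ hz0' hst
        have h3 : (1 : ℝ) + s = 1 + t := by exact_mod_cast h2
        linarith
      have hIoo : (Set.Ioo (0:ℝ) (ε k)).Infinite := Set.Ioo_infinite (hεpos k)
      obtain ⟨t, ht⟩ := (hIoo.diff hpre).nonempty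
      refine ⟨t, ht.1.1, ht.1.2, ?_⟩
      have := ht.2
      simpa [hm, Set.mem_preimage, IsRoot] using this
    choose t ht0 htε htne using hsel
    set zk : ℕ → ℂ := fun k => ((1 + t k : ℝ) : ℂ) * z with hzk
    have hzk1 : ∀ k, 1 < ‖zk k‖ := by
      intro k
      rw [hzk, norm_mul, Complex.norm_real, Real.norm_eq_abs, abs_of_pos (by linarith [ht0 k])]
      nlinarith [ht0 k]
    have htt : Filter.Tendsto t Filter.atTop (nhds 0) := by
      apply tendsto_of_tendsto_of_tendsto_of_le_of_le tendsto_const_nhds hεt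
      · exact fun k => le_of_lt (ht0 k)
      · exact fun k => le_of_lt (htε k)
    have hzkt : Filter.Tendsto zk Filter.atTop (nhds z) := by
      have h1 : Filter.Tendsto (fun k => ((1 + t k : ℝ) : ℂ)) Filter.atTop
          (nhds ((1:ℝ):ℂ)) := by
        apply Filter.Tendsto.comp (Complex.continuous_ofReal.tendsto (1:ℝ))
        have h0 : Filter.Tendsto (fun k => (1 + t k : ℝ)) Filter.atTop (nhds (1 + 0)) :=
          tendsto_const_nhds.add htt
        simpa using h0
      have h2 := h1.mul_const z
      rw [hzk]
      simpa using h2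
    -- the core inequality along the sequence
    have hcore : ∀ k, 2 * ‖(Tp (R : ℂ) β (A k) n P).eval (zk k)‖
        ≤ maxSphere P * ((n : ℝ) * ‖(R : ℂ) ^ n - β‖ * ‖zk k‖ ^ (n - 1)
            + (n : ℝ) * ‖1 - β‖ * ‖A k‖) := by
      intro k
      exact core hP hn hz hR hβ (hA0 k) (hAlt k) (hzk1 k) (htne k)
    -- pass to the limit
    have evP : Continuous fun w : ℂ => P.eval w := P.continuous
    have evD : Continuous fun w : ℂ => (derivative P).eval w := (derivative P).continuous
    have hRzk : Filter.Tendsto (fun k => (R : ℂ) * zk k) Filter.atTop (nhds ((R : ℂ) * z)) :=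
      hzkt.const_mul _
    have hT : Filter.Tendsto (fun k => (Tp (R : ℂ) β (A k) n P).eval (zk k)) Filter.atTop
        (nhds ((1 + a * z) * ((R : ℂ) * (derivative P).eval ((R : ℂ) * z)
            - β * (derivative P).eval z)
          - (n : ℂ) * a * (P.eval ((R : ℂ) * z) - β * P.eval z))) := by
      have e : ∀ k, (Tp (R : ℂ) β (A k) n P).eval (zk k)
          = (1 + A k * zk k) * ((R : ℂ) * (derivative P).eval ((R : ℂ) * zk k)
              - β * (derivative P).eval (zk k))
            - (n : ℂ) * A k * (P.eval ((R : ℂ) * zk k) - β * P.eval (zk k)) := by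
        intro k; exact eval_Tp _ _ _ _ _ _
      rw [show (fun k => (Tp (R : ℂ) β (A k) n P).eval (zk k)) = _ from funext e]
      exact ((tendsto_const_nhds.add (hAtend.mul hzkt)).mul
          ((tendsto_const_nhds.mul ((evD.tendsto _).comp hRzk)).sub
            (tendsto_const_nhds.mul ((evD.tendsto _).comp hzkt)))).sub
        ((tendsto_const_nhds.mul hAtend).mul
          (((evP.tendsto _).comp hRzk).sub (tendsto_const_nhds.mul ((evP.tendsto _).comp hzkt))))
    have hTabs := (continuous_norm.tendsto _).comp hT
    have habszk : Filter.Tendsto (fun k => ‖zk k‖) Filter.atTop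
        (nhds (‖z‖)) := (continuous_norm.tendsto _).comp hzkt
    have habsA : Filter.Tendsto (fun k => ‖A k‖) Filter.atTop
        (nhds (‖a‖)) := (continuous_norm.tendsto _).comp hAtend
    have hRHS : Filter.Tendsto (fun k => maxSphere P *
        ((n : ℝ) * ‖(R : ℂ) ^ n - β‖ * ‖zk k‖ ^ (n - 1)
          + (n : ℝ) * ‖1 - β‖ * ‖A k‖)) Filter.atTop
        (nhds (maxSphere P *
          ((n : ℝ) * ‖(R : ℂ) ^ n - β‖ * ‖z‖ ^ (n - 1)
            + (n : ℝ) * ‖1 - β‖ * ‖a‖))) :=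
      tendsto_const_nhds.mul ((tendsto_const_nhds.mul (habszk.pow _)).add
        (tendsto_const_nhds.mul habsA))
    have hfinal := le_of_tendsto_of_tendsto' (hTabs.const_mul 2) hRHS hcore
    linarith [hfinal]
end
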